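/- arXiv:1312.4444 — 2 statements merged into one kernel-verified Lean document; each statement's English description precedes it below -/
import Mathlib

section
/- Let L > 0, T > 0, b ∈ ℝ, and let u : [0,T] × ℝ × [0,L] → ℝ be infinitely differentiable, vanishing whenever |x| ≥ R for some R > 0, and satisfying u(t,x,0) = u(t,x,L) = 0 for all t, x. Let f₀, f₁, f₂ : [0,T] × ℝ × [0,L] → ℝ be continuously differentiable, and suppose u satisfies pointwise the equation u_t + b u_x + u_xxx + u_xyy = f₀ + ∂_x f₁ + ∂_y f₂. Then for every t ∈ [0,T]: ∬_Σ u²(t,x,y) dx dy = ∬_Σ u²(0,x,y) dx dy + 2 ∫₀^t ∬_Σ ( f₀ u − f₁ u_x − f₂ u_y ) dx dy dτ. -/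
open MeasureTheory Real Set

noncomputable section

/-- Partial derivative in the time variable. -/
def Dt (u : ℝ → ℝ → ℝ → ℝ) (t x y : ℝ) : ℝ := deriv (fun s => u s x y) t

/-- Partial derivative in `x`. -/
def Dx (u : ℝ → ℝ → ℝ → ℝ) (t x y : ℝ) : ℝ := deriv (fun s => u t s y) x

/-- Partial derivative in `y`. -/
def Dy (u : ℝ → ℝ → ℝ → ℝ) (t x y : ℝ) : ℝ := deriv (fun s => u t x s) y

/-! ### Auxiliary machinery -/

/-- Partial derivative of a function on `ℝ × ℝ × ℝ` in the first coordinate. -/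
def pd1 (V : ℝ × ℝ × ℝ → ℝ) (p : ℝ × ℝ × ℝ) : ℝ := fderiv ℝ V p (1, 0, 0)

/-- Partial derivative in the second coordinate. -/
def pd2 (V : ℝ × ℝ × ℝ → ℝ) (p : ℝ × ℝ × ℝ) : ℝ := fderiv ℝ V p (0, 1, 0)

/-- Partial derivative in the third coordinate. -/
def pd3 (V : ℝ × ℝ × ℝ → ℝ) (p : ℝ × ℝ × ℝ) : ℝ := fderiv ℝ V p (0, 0, 1)

theorem hasDerivAt_slice1 {V : ℝ × ℝ × ℝ → ℝ} {t x y : ℝ}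
    (hV : DifferentiableAt ℝ V (t, x, y)) :
    HasDerivAt (fun s => V (s, x, y)) (pd1 V (t, x, y)) t := by
  have hc : HasDerivAt (fun s : ℝ => ((s, x, y) : ℝ × ℝ × ℝ)) ((1:ℝ), (0:ℝ), (0:ℝ)) t :=
    (hasDerivAt_id t).prodMk ((hasDerivAt_const t x).prodMk (hasDerivAt_const t y))
  exact hV.hasFDerivAt.comp_hasDerivAt t hc

theorem hasDerivAt_slice2 {V : ℝ × ℝ × ℝ → ℝ} {t x y : ℝ}
    (hV : DifferentiableAt ℝ V (t, x, y)) :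
    HasDerivAt (fun x' => V (t, x', y)) (pd2 V (t, x, y)) x := by
  have hc : HasDerivAt (fun x' : ℝ => ((t, x', y) : ℝ × ℝ × ℝ)) ((0:ℝ), (1:ℝ), (0:ℝ)) x :=
    (hasDerivAt_const x t).prodMk ((hasDerivAt_id x).prodMk (hasDerivAt_const x y))
  exact hV.hasFDerivAt.comp_hasDerivAt x hc

theorem hasDerivAt_slice3 {V : ℝ × ℝ × ℝ → ℝ} {t x y : ℝ}
    (hV : DifferentiableAt ℝ V (t, x, y)) :
    HasDerivAt (fun y' => V (t, x, y')) (pd3 V (t, x, y)) y := by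
  have hc : HasDerivAt (fun y' : ℝ => ((t, x, y') : ℝ × ℝ × ℝ)) ((0:ℝ), (0:ℝ), (1:ℝ)) y :=
    (hasDerivAt_const y t).prodMk ((hasDerivAt_const y x).prodMk (hasDerivAt_id y))
  exact hV.hasFDerivAt.comp_hasDerivAt y hc

theorem contDiff_pd1 {V : ℝ × ℝ × ℝ → ℝ} (hV : ContDiff ℝ (⊤ : ℕ∞) V) :
    ContDiff ℝ (⊤ : ℕ∞) (pd1 V) :=
  (hV.fderiv_right (m := (⊤ : ℕ∞)) (by norm_cast)).clm_apply contDiff_const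

theorem contDiff_pd2 {V : ℝ × ℝ × ℝ → ℝ} (hV : ContDiff ℝ (⊤ : ℕ∞) V) :
    ContDiff ℝ (⊤ : ℕ∞) (pd2 V) :=
  (hV.fderiv_right (m := (⊤ : ℕ∞)) (by norm_cast)).clm_apply contDiff_const

theorem contDiff_pd3 {V : ℝ × ℝ × ℝ → ℝ} (hV : ContDiff ℝ (⊤ : ℕ∞) V) :
    ContDiff ℝ (⊤ : ℕ∞) (pd3 V) :=
  (hV.fderiv_right (m := (⊤ : ℕ∞)) (by norm_cast)).clm_apply contDiff_const

theorem cont_pd2_of_C1 {F : ℝ × ℝ × ℝ → ℝ} (hF : ContDiff ℝ 1 F) : Continuous (pd2 F) :=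
  (hF.continuous_fderiv one_ne_zero).clm_apply continuous_const

theorem cont_pd3_of_C1 {F : ℝ × ℝ × ℝ → ℝ} (hF : ContDiff ℝ 1 F) : Continuous (pd3 F) :=
  (hF.continuous_fderiv one_ne_zero).clm_apply continuous_const

theorem clairaut_aux {V : ℝ × ℝ × ℝ → ℝ} (hV : ContDiff ℝ (⊤ : ℕ∞) V)
    (p : ℝ × ℝ × ℝ) : pd2 (pd3 V) p = pd3 (pd2 V) p := by
  have hdV : Differentiable ℝ (fderiv ℝ V) :=
    (hV.fderiv_right (m := (⊤ : ℕ∞)) (by norm_cast)).differentiable (by norm_cast)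
  have e1 : ∀ v w : ℝ × ℝ × ℝ,
      fderiv ℝ (fun q => fderiv ℝ V q w) p v = fderiv ℝ (fderiv ℝ V) p v w := by
    intro v w
    rw [fderiv_clm_apply (hdV p) (differentiableAt_const w)]
    simp
  show fderiv ℝ (fun q => fderiv ℝ V q (0, 0, 1)) p (0, 1, 0)
      = fderiv ℝ (fun q => fderiv ℝ V q (0, 1, 0)) p (0, 0, 1)
  rw [e1, e1]
  exact second_derivative_symmetric
    (fun q => ((hV.differentiable (by norm_cast)) q).hasFDerivAt) (hdV p).hasFDerivAt _ _

theorem vanish_step {R : ℝ} {V : ℝ × ℝ × ℝ → ℝ}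
    (h : ∀ p : ℝ × ℝ × ℝ, R < |p.2.1| → V p = 0) (e : ℝ × ℝ × ℝ) :
    ∀ p : ℝ × ℝ × ℝ, R < |p.2.1| → fderiv ℝ V p e = 0 := by
  intro p hp
  have hopen : IsOpen {q : ℝ × ℝ × ℝ | R < |q.2.1|} :=
    isOpen_lt continuous_const (continuous_snd.fst.abs)
  have hev : V =ᶠ[nhds p] (fun _ => (0:ℝ)) :=
    Filter.eventuallyEq_of_mem (hopen.mem_nhds hp) (fun q hq => h q hq)
  rw [hev.fderiv_eq]
  simp

theorem integral_deriv_zero {g g' : ℝ → ℝ} {R : ℝ} (hR : 0 < R)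
    (hderiv : ∀ x, HasDerivAt g (g' x) x) (hg' : Continuous g')
    (hzero : ∀ x : ℝ, R ≤ |x| → g x = 0) : (∫ x : ℝ, g' x) = 0 := by
  have hzero' : ∀ x : ℝ, x ∉ Ioc (-(R+1)) (R+1) → g' x = 0 := by
    intro x hx
    rw [mem_Ioc, not_and_or] at hx
    have hgt : R < |x| := by
      rcases hx with h | h
      · push_neg at h
        rw [abs_of_nonpos (by linarith)]; linarith
      · push_neg at h
        rw [abs_of_pos (by linarith)]; linarith
    have hopen : IsOpen {x' : ℝ | R < |x'|} := isOpen_lt continuous_const continuous_abs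
    have hev : g =ᶠ[nhds x] (fun _ => (0:ℝ)) :=
      Filter.eventuallyEq_of_mem (hopen.mem_nhds hgt) (fun q hq => hzero q hq.le)
    rw [← (hderiv x).deriv, hev.deriv_eq]
    simp
  have h1 : (∫ x : ℝ, g' x) = ∫ x in Ioc (-(R+1)) (R+1), g' x :=
    (setIntegral_eq_integral_of_forall_compl_eq_zero (fun x hx => hzero' x hx)).symm
  rw [h1, ← intervalIntegral.integral_of_le (by linarith),
    intervalIntegral.integral_eq_sub_of_hasDerivAt (fun x _ => hderiv x)
      (hg'.intervalIntegrable _ _),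
    hzero (R+1) (by rw [abs_of_pos (by linarith)]; linarith),
    hzero (-(R+1)) (by rw [abs_neg, abs_of_pos (by linarith)]; linarith), sub_zero]

theorem indicator_integrable {L R C : ℝ} (hL : 0 < L) :
    Integrable ((Icc (-R) R ×ˢ (univ : Set ℝ)).indicator (fun _ => C))
      ((volume : Measure ℝ).prod ((volume : Measure ℝ).restrict (Ioo 0 L))) := by
  rw [integrable_indicator_iff (measurableSet_Icc.prod MeasurableSet.univ)]
  refine (integrableOn_const_iff).2 (Or.inr ?_)
  rw [Measure.prod_prod, Measure.restrict_apply MeasurableSet.univ, univ_inter]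
  exact ENNReal.mul_lt_top (by simp) (by simp [Real.volume_Ioo])

theorem ae_snd_mem {L : ℝ} :
    ∀ᵐ p : ℝ × ℝ ∂((volume : Measure ℝ).prod ((volume : Measure ℝ).restrict (Ioo 0 L))),
      p.2 ∈ Ioo (0:ℝ) L := by
  rw [MeasureTheory.ae_iff]
  have h0 : ((volume : Measure ℝ).prod ((volume : Measure ℝ).restrict (Ioo 0 L)))
      ((univ : Set ℝ) ×ˢ (Ioo (0:ℝ) L)ᶜ) = 0 := by
    rw [Measure.prod_prod, Measure.restrict_apply (measurableSet_Ioo.compl),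
      compl_inter_self]
    simp
  exact measure_mono_null (fun p hp => Set.mem_prod.2 ⟨mem_univ _, hp⟩) h0

theorem integrable_of_support {L R : ℝ} (hL : 0 < L) (hR : 0 < R) {g : ℝ × ℝ → ℝ}
    (hg : Continuous g) (hzero : ∀ p : ℝ × ℝ, R ≤ |p.1| → g p = 0) :
    Integrable g ((volume : Measure ℝ).prod ((volume : Measure ℝ).restrict (Ioo 0 L))) := by
  obtain ⟨C, hC⟩ := (((isCompact_Icc (a := -R) (b := R)).prod
      (isCompact_Icc (a := (0:ℝ)) (b := L)))).exists_bound_of_continuousOn hg.continuousOn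
  refine Integrable.mono'
    (g := (Icc (-R) R ×ˢ (univ : Set ℝ)).indicator (fun _ => max C 0))
    (indicator_integrable hL) hg.aestronglyMeasurable ?_
  filter_upwards [ae_snd_mem] with p hp
  by_cases hx : p.1 ∈ Icc (-R) R
  · rw [indicator_of_mem (Set.mem_prod.2 ⟨hx, mem_univ _⟩)]
    exact le_trans (hC p (Set.mem_prod.2 ⟨hx, Ioo_subset_Icc_self hp⟩)) (le_max_left _ _)
  · have hRx : R ≤ |p.1| := by
      rw [mem_Icc, not_and_or] at hx
      rcases hx with h | h
      · push_neg at h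
        rw [abs_of_neg (by linarith)]; linarith
      · push_neg at h
        rw [abs_of_pos (by linarith)]; linarith
    rw [hzero p hRx]
    simpa using indicator_nonneg (fun _ _ => le_max_right C 0) p

/-- The quantity whose `x`-derivative collects all `∂ₓ`-exact terms. -/
def Phi (b : ℝ) (U F₁ : ℝ × ℝ × ℝ → ℝ) (p : ℝ × ℝ × ℝ) : ℝ :=
  2*(U p*F₁ p) - b*(U p*U p) - 2*(U p*pd2 (pd2 U) p) + pd2 U p*pd2 U p
    - 2*(U p*pd3 (pd3 U) p) - pd3 U p*pd3 U p

/-- The `x`-derivative of `Phi`. -/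
def Phix (b : ℝ) (U F₁ : ℝ × ℝ × ℝ → ℝ) (p : ℝ × ℝ × ℝ) : ℝ :=
  2*(pd2 U p*F₁ p + U p*pd2 F₁ p) - b*(pd2 U p*U p + U p*pd2 U p)
    - 2*(pd2 U p*pd2 (pd2 U) p + U p*pd2 (pd2 (pd2 U)) p)
    + (pd2 (pd2 U) p*pd2 U p + pd2 U p*pd2 (pd2 U) p)
    - 2*(pd2 U p*pd3 (pd3 U) p + U p*pd2 (pd3 (pd3 U)) p)
    - (pd2 (pd3 U) p*pd3 U p + pd3 U p*pd2 (pd3 U) p)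

/-- The quantity whose `y`-derivative collects all `∂_y`-exact terms. -/
def Psi (U F₂ : ℝ × ℝ × ℝ → ℝ) (p : ℝ × ℝ × ℝ) : ℝ :=
  2*(U p*F₂ p) + 2*(pd2 U p*pd3 U p)

/-- The `y`-derivative of `Psi`. -/
def Psiy (U F₂ : ℝ × ℝ × ℝ → ℝ) (p : ℝ × ℝ × ℝ) : ℝ :=
  2*(pd3 U p*F₂ p + U p*pd3 F₂ p) + 2*(pd3 (pd2 U) p*pd3 U p + pd2 U p*pd3 (pd3 U) p)

theorem hasDerivAt_Phi {b : ℝ} {U F₁ : ℝ × ℝ × ℝ → ℝ} (hU : ContDiff ℝ (⊤ : ℕ∞) U)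
    (hF₁ : ContDiff ℝ 1 F₁) (t x y : ℝ) :
    HasDerivAt (fun x' => Phi b U F₁ (t, x', y)) (Phix b U F₁ (t, x, y)) x := by
  have dU : Differentiable ℝ U := hU.differentiable (by norm_cast)
  have h1 : HasDerivAt (fun x' => U (t, x', y)) (pd2 U (t, x, y)) x :=
    hasDerivAt_slice2 (dU _)
  have h2 : HasDerivAt (fun x' => F₁ (t, x', y)) (pd2 F₁ (t, x, y)) x :=
    hasDerivAt_slice2 ((hF₁.differentiable one_ne_zero) _)
  have h3 : HasDerivAt (fun x' => pd2 (pd2 U) (t, x', y)) (pd2 (pd2 (pd2 U)) (t, x, y)) x :=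
    hasDerivAt_slice2 (((contDiff_pd2 (contDiff_pd2 hU)).differentiable (by norm_cast)) _)
  have h4 : HasDerivAt (fun x' => pd2 U (t, x', y)) (pd2 (pd2 U) (t, x, y)) x :=
    hasDerivAt_slice2 (((contDiff_pd2 hU).differentiable (by norm_cast)) _)
  have h5 : HasDerivAt (fun x' => pd3 (pd3 U) (t, x', y)) (pd2 (pd3 (pd3 U)) (t, x, y)) x :=
    hasDerivAt_slice2 (((contDiff_pd3 (contDiff_pd3 hU)).differentiable (by norm_cast)) _)
  have h6 : HasDerivAt (fun x' => pd3 U (t, x', y)) (pd2 (pd3 U) (t, x, y)) x :=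
    hasDerivAt_slice2 (((contDiff_pd3 hU).differentiable (by norm_cast)) _)
  exact (((((h1.mul h2).const_mul 2).sub ((h1.mul h1).const_mul b)).sub
    ((h1.mul h3).const_mul 2)).add (h4.mul h4)).sub ((h1.mul h5).const_mul 2) |>.sub (h6.mul h6)

theorem hasDerivAt_Psi {U F₂ : ℝ × ℝ × ℝ → ℝ} (hU : ContDiff ℝ (⊤ : ℕ∞) U)
    (hF₂ : ContDiff ℝ 1 F₂) (t x y : ℝ) :
    HasDerivAt (fun y' => Psi U F₂ (t, x, y')) (Psiy U F₂ (t, x, y)) y := by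
  have dU : Differentiable ℝ U := hU.differentiable (by norm_cast)
  have h1 : HasDerivAt (fun y' => U (t, x, y')) (pd3 U (t, x, y)) y :=
    hasDerivAt_slice3 (dU _)
  have h2 : HasDerivAt (fun y' => F₂ (t, x, y')) (pd3 F₂ (t, x, y)) y :=
    hasDerivAt_slice3 ((hF₂.differentiable one_ne_zero) _)
  have h3 : HasDerivAt (fun y' => pd2 U (t, x, y')) (pd3 (pd2 U) (t, x, y)) y :=
    hasDerivAt_slice3 (((contDiff_pd2 hU).differentiable (by norm_cast)) _)
  have h4 : HasDerivAt (fun y' => pd3 U (t, x, y')) (pd3 (pd3 U) (t, x, y)) y :=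
    hasDerivAt_slice3 (((contDiff_pd3 hU).differentiable (by norm_cast)) _)
  exact ((h1.mul h2).const_mul 2).add ((h3.mul h4).const_mul 2)

theorem main_aux (L T b R₀ : ℝ) (hL : 0 < L) (hT : 0 < T) (hR₀ : 0 < R₀)
    (U F₀ F₁ F₂ : ℝ × ℝ × ℝ → ℝ)
    (hU : ContDiff ℝ (⊤ : ℕ∞) U)
    (hsupp : ∀ p : ℝ × ℝ × ℝ, R₀ ≤ |p.2.1| → U p = 0)
    (hbc0 : ∀ t x : ℝ, U (t, x, 0) = 0) (hbcL : ∀ t x : ℝ, U (t, x, L) = 0)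
    (hF₀ : ContDiff ℝ 1 F₀) (hF₁ : ContDiff ℝ 1 F₁) (hF₂ : ContDiff ℝ 1 F₂)
    (heq : ∀ t ∈ Icc (0:ℝ) T, ∀ x : ℝ, ∀ y ∈ Icc (0:ℝ) L,
      pd1 U (t,x,y) + b * pd2 U (t,x,y) + pd2 (pd2 (pd2 U)) (t,x,y) + pd2 (pd3 (pd3 U)) (t,x,y)
        = F₀ (t,x,y) + pd2 F₁ (t,x,y) + pd3 F₂ (t,x,y)) :
    ∀ t ∈ Icc (0:ℝ) T,
      (∫ x : ℝ, ∫ y in Ioo (0:ℝ) L, (U (t,x,y)) ^ 2)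
        = (∫ x : ℝ, ∫ y in Ioo (0:ℝ) L, (U (0,x,y)) ^ 2)
          + 2 * ∫ τ in (0:ℝ)..t, ∫ x : ℝ, ∫ y in Ioo (0:ℝ) L,
              (F₀ (τ,x,y) * U (τ,x,y) - F₁ (τ,x,y) * pd2 U (τ,x,y)
                - F₂ (τ,x,y) * pd3 U (τ,x,y)) := by
  set M := ((volume : Measure ℝ).prod ((volume : Measure ℝ).restrict (Ioo 0 L))) with hMdef
  have dU : Differentiable ℝ U := hU.differentiable (by norm_cast)
  have cU : Continuous U := hU.continuous
  have cUT : Continuous (pd1 U) := (contDiff_pd1 hU).continuous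
  have cUX : Continuous (pd2 U) := (contDiff_pd2 hU).continuous
  have cUY : Continuous (pd3 U) := (contDiff_pd3 hU).continuous
  have cUXX : Continuous (pd2 (pd2 U)) := (contDiff_pd2 (contDiff_pd2 hU)).continuous
  have cUXXX : Continuous (pd2 (pd2 (pd2 U))) :=
    (contDiff_pd2 (contDiff_pd2 (contDiff_pd2 hU))).continuous
  have cUYY : Continuous (pd3 (pd3 U)) := (contDiff_pd3 (contDiff_pd3 hU)).continuous
  have cUXYY : Continuous (pd2 (pd3 (pd3 U))) :=
    (contDiff_pd2 (contDiff_pd3 (contDiff_pd3 hU))).continuous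
  have cUYX : Continuous (pd3 (pd2 U)) := (contDiff_pd3 (contDiff_pd2 hU)).continuous
  have cUXY : Continuous (pd2 (pd3 U)) := (contDiff_pd2 (contDiff_pd3 hU)).continuous
  have cF0 : Continuous F₀ := hF₀.continuous
  have cF1 : Continuous F₁ := hF₁.continuous
  have cF2 : Continuous F₂ := hF₂.continuous
  have cF1X : Continuous (pd2 F₁) := cont_pd2_of_C1 hF₁
  have cF2Y : Continuous (pd3 F₂) := cont_pd3_of_C1 hF₂
  -- vanishing of all derived functions for R₀ < |x|
  have pU : ∀ p : ℝ × ℝ × ℝ, R₀ < |p.2.1| → U p = 0 := fun p hp => hsupp p hp.le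
  have pUT : ∀ p : ℝ × ℝ × ℝ, R₀ < |p.2.1| → pd1 U p = 0 :=
    vanish_step pU ((1:ℝ),(0:ℝ),(0:ℝ))
  have pUX : ∀ p : ℝ × ℝ × ℝ, R₀ < |p.2.1| → pd2 U p = 0 :=
    vanish_step pU ((0:ℝ),(1:ℝ),(0:ℝ))
  have pUY : ∀ p : ℝ × ℝ × ℝ, R₀ < |p.2.1| → pd3 U p = 0 :=
    vanish_step pU ((0:ℝ),(0:ℝ),(1:ℝ))
  have hlt : ∀ p : ℝ × ℝ, R₀ + 1 ≤ |p.1| → R₀ < |((p.1 : ℝ))| :=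
    fun p hp => lt_of_lt_of_le (lt_add_one R₀) hp
  -- Clairaut
  have hcl : ∀ p : ℝ × ℝ × ℝ, pd2 (pd3 U) p = pd3 (pd2 U) p := clairaut_aux hU
  -- boundary values
  have hUX0 : ∀ s x : ℝ, pd2 U (s, x, 0) = 0 := by
    intro s x
    have h := (hasDerivAt_slice2 (dU ((s, x, (0:ℝ)) : ℝ × ℝ × ℝ))).deriv
    rw [← h, show (fun x' => U (s, x', (0:ℝ))) = (fun _ => (0:ℝ)) from
      funext fun x' => hbc0 s x']
    exact deriv_const x 0
  have hUXL : ∀ s x : ℝ, pd2 U (s, x, L) = 0 := by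
    intro s x
    have h := (hasDerivAt_slice2 (dU ((s, x, L) : ℝ × ℝ × ℝ))).deriv
    rw [← h, show (fun x' => U (s, x', L)) = (fun _ => (0:ℝ)) from
      funext fun x' => hbcL s x']
    exact deriv_const x 0
  -- embeddings
  have cemb : ∀ s : ℝ, Continuous (fun a : ℝ × ℝ => ((s, a.1, a.2) : ℝ × ℝ × ℝ)) :=
    fun s => continuous_const.prodMk (continuous_fst.prodMk continuous_snd)
  have cline : ∀ a : ℝ × ℝ, Continuous (fun s : ℝ => ((s, a.1, a.2) : ℝ × ℝ × ℝ)) :=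
    fun a => continuous_id.prodMk continuous_const
  -- generic integrability
  have hint : ∀ {g : ℝ × ℝ → ℝ}, Continuous g →
      (∀ p : ℝ × ℝ, R₀ + 1 ≤ |p.1| → g p = 0) → Integrable g M :=
    fun hg h0 => integrable_of_support hL (by linarith) hg h0
  -- continuity of composite functions
  have cPhix : Continuous (Phix b U F₁) := by
    exact (((((continuous_const.mul ((cUX.mul cF1).add (cU.mul cF1X))).sub
      (continuous_const.mul ((cUX.mul cU).add (cU.mul cUX)))).sub
      (continuous_const.mul ((cUX.mul cUXX).add (cU.mul cUXXX)))).add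
      ((cUXX.mul cUX).add (cUX.mul cUXX))).sub
      (continuous_const.mul ((cUX.mul cUYY).add (cU.mul cUXYY)))).sub
      ((cUXY.mul cUY).add (cUY.mul cUXY))
  have cPsiy : Continuous (Psiy U F₂) :=
    (continuous_const.mul ((cUY.mul cF2).add (cU.mul cF2Y))).add
      (continuous_const.mul ((cUYX.mul cUY).add (cUX.mul cUYY)))
  -- vanishing of composite functions
  have pPhi : ∀ p : ℝ × ℝ × ℝ, R₀ < |p.2.1| → Phi b U F₁ p = 0 := by
    intro p hp; simp [Phi, pU p hp, pUX p hp, pUY p hp]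
  have pPhix : ∀ p : ℝ × ℝ × ℝ, R₀ < |p.2.1| → Phix b U F₁ p = 0 := by
    intro p hp; simp [Phix, pU p hp, pUX p hp, pUY p hp]
  have pPsiy : ∀ p : ℝ × ℝ × ℝ, R₀ < |p.2.1| → Psiy U F₂ p = 0 := by
    intro p hp; simp [Psiy, pU p hp, pUX p hp, pUY p hp]
  -- almost everywhere membership
  have hae : ∀ᵐ p : ℝ × ℝ ∂M, p.2 ∈ Ioo (0:ℝ) L := ae_snd_mem
  -- the pointwise differential identity
  have hpoint : ∀ τ ∈ Icc (0:ℝ) T, ∀ x : ℝ, ∀ y ∈ Icc (0:ℝ) L,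
      2 * U (τ,x,y) * pd1 U (τ,x,y)
        = 2 * (F₀ (τ,x,y) * U (τ,x,y) - F₁ (τ,x,y) * pd2 U (τ,x,y)
            - F₂ (τ,x,y) * pd3 U (τ,x,y))
          + Phix b U F₁ (τ,x,y) + Psiy U F₂ (τ,x,y) := by
    intro τ hτ x y hy
    have he := heq τ hτ x y hy
    have hc := hcl (τ,x,y)
    simp only [Phix, Psiy]
    linear_combination (2 * U (τ,x,y)) * he + (2 * pd3 U (τ,x,y)) * hc
  -- the uniform local bound for the time derivative
  have hbound : ∀ s₀ : ℝ, ∃ C : ℝ, ∀ s ∈ Metric.ball s₀ 1, ∀ a : ℝ × ℝ, a.2 ∈ Ioo (0:ℝ) L →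
      ‖2 * U (s,a.1,a.2) * pd1 U (s,a.1,a.2)‖
        ≤ (Icc (-(R₀+1)) (R₀+1) ×ˢ (univ : Set ℝ)).indicator (fun _ => C) a := by
    intro s₀
    obtain ⟨C, hC⟩ := ((isCompact_Icc (a := s₀-1) (b := s₀+1)).prod
      ((isCompact_Icc (a := -(R₀+1)) (b := R₀+1)).prod
        (isCompact_Icc (a := (0:ℝ)) (b := L)))).exists_bound_of_continuousOn
      (Continuous.continuousOn ((continuous_const.mul cU).mul cUT))
    refine ⟨max C 0, fun s hs a ha => ?_⟩
    by_cases hx : a.1 ∈ Icc (-(R₀+1)) (R₀+1)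
    · rw [indicator_of_mem (Set.mem_prod.2 ⟨hx, mem_univ _⟩)]
      refine le_trans (hC ((s, a.1, a.2) : ℝ × ℝ × ℝ) ?_) (le_max_left _ _)
      have hs' := abs_lt.1 (by rwa [Metric.mem_ball, Real.dist_eq] at hs)
      exact Set.mem_prod.2 ⟨Set.mem_Icc.2 ⟨by linarith [hs'.1], by linarith [hs'.2]⟩,
        Set.mem_prod.2 ⟨hx, Ioo_subset_Icc_self ha⟩⟩
    · have hRx : R₀ + 1 ≤ |a.1| := by
        rw [mem_Icc, not_and_or] at hx
        rcases hx with h | h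
        · push_neg at h
          rw [abs_of_neg (by linarith)]; linarith
        · push_neg at h
          rw [abs_of_pos (by linarith)]; linarith
      have hU0 : U (s, a.1, a.2) = 0 := pU _ (hlt a hRx)
      rw [hU0]
      simp only [mul_zero, zero_mul, norm_zero]
      exact indicator_nonneg (fun _ _ => le_max_right _ _) _
  -- differentiation under the integral sign
  have hderivF : ∀ s₀ : ℝ, HasDerivAt (fun s => ∫ a : ℝ × ℝ, (U (s,a.1,a.2)) ^ 2 ∂M)
      (∫ a : ℝ × ℝ, 2 * U (s₀,a.1,a.2) * pd1 U (s₀,a.1,a.2) ∂M) s₀ := by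
    intro s₀
    obtain ⟨C, hC⟩ := hbound s₀
    refine (hasDerivAt_integral_of_dominated_loc_of_deriv_le
      (F := fun s (a : ℝ × ℝ) => (U (s,a.1,a.2)) ^ 2)
      (F' := fun s (a : ℝ × ℝ) => 2 * U (s,a.1,a.2) * pd1 U (s,a.1,a.2))
      (bound := (Icc (-(R₀+1)) (R₀+1) ×ˢ (univ : Set ℝ)).indicator (fun _ => C))
      (Metric.ball_mem_nhds s₀ one_pos) ?_ ?_ ?_ ?_ ?_ ?_).2
    · exact Filter.Eventually.of_forall fun s =>
        ((cU.comp (cemb s)).pow 2).aestronglyMeasurable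
    · refine hint ((cU.comp (cemb s₀)).pow 2) fun p hp => ?_
      show (U (s₀, p.1, p.2)) ^ 2 = 0
      rw [pU _ (hlt p hp)]; ring
    · exact ((continuous_const.mul (cU.comp (cemb s₀))).mul
        (cUT.comp (cemb s₀))).aestronglyMeasurable
    · filter_upwards [hae] with a ha
      intro s hs
      exact hC s hs a ha
    · exact indicator_integrable hL
    · refine Filter.Eventually.of_forall fun a => ?_
      intro s hs
      have h := (hasDerivAt_slice1 (dU ((s, a.1, a.2) : ℝ × ℝ × ℝ))).fun_pow 2
      refine h.congr_deriv ?_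
      simp
  -- continuity of the candidate derivative in time
  have hcontG : Continuous (fun s => ∫ a : ℝ × ℝ,
      2 * U (s,a.1,a.2) * pd1 U (s,a.1,a.2) ∂M) := by
    rw [continuous_iff_continuousAt]
    intro s₀
    obtain ⟨C, hC⟩ := hbound s₀
    refine continuousAt_of_dominated
      (F := fun s (a : ℝ × ℝ) => 2 * U (s,a.1,a.2) * pd1 U (s,a.1,a.2))
      (bound := (Icc (-(R₀+1)) (R₀+1) ×ˢ (univ : Set ℝ)).indicator (fun _ => C))
      ?_ ?_ (indicator_integrable hL) ?_
    · exact Filter.Eventually.of_forall fun s =>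
        ((continuous_const.mul (cU.comp (cemb s))).mul (cUT.comp (cemb s))).aestronglyMeasurable
    · refine Filter.eventually_of_mem (Metric.ball_mem_nhds s₀ one_pos) fun s hs => ?_
      filter_upwards [hae] with a ha
      exact hC s hs a ha
    · refine Filter.Eventually.of_forall fun a => ?_
      exact (((continuous_const.mul (cU.comp (cline a))).mul
        (cUT.comp (cline a)))).continuousAt
  -- representation of the double integral over the product measure
  have hFrep : ∀ s : ℝ, (∫ x : ℝ, ∫ y in Ioo (0:ℝ) L, (U (s,x,y)) ^ 2)
      = ∫ a : ℝ × ℝ, (U (s,a.1,a.2)) ^ 2 ∂M := by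
    intro s
    refine (MeasureTheory.integral_prod _ (hint ((cU.comp (cemb s)).pow 2)
      fun p hp => ?_)).symm
    show (U (s, p.1, p.2)) ^ 2 = 0
    rw [pU _ (hlt p hp)]; ring
  -- the main spatial identity at each fixed time
  have hstepC : ∀ τ ∈ Icc (0:ℝ) T,
      (∫ a : ℝ × ℝ, 2 * U (τ,a.1,a.2) * pd1 U (τ,a.1,a.2) ∂M)
        = 2 * ∫ x : ℝ, ∫ y in Ioo (0:ℝ) L,
            (F₀ (τ,x,y) * U (τ,x,y) - F₁ (τ,x,y) * pd2 U (τ,x,y)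
              - F₂ (τ,x,y) * pd3 U (τ,x,y)) := by
    intro τ hτ
    have cH : Continuous (fun a : ℝ × ℝ => F₀ (τ,a.1,a.2) * U (τ,a.1,a.2)
        - F₁ (τ,a.1,a.2) * pd2 U (τ,a.1,a.2) - F₂ (τ,a.1,a.2) * pd3 U (τ,a.1,a.2)) :=
      (((cF0.comp (cemb τ)).mul (cU.comp (cemb τ))).sub
        ((cF1.comp (cemb τ)).mul (cUX.comp (cemb τ)))).sub
        ((cF2.comp (cemb τ)).mul (cUY.comp (cemb τ)))
    have iH : Integrable (fun a : ℝ × ℝ => F₀ (τ,a.1,a.2) * U (τ,a.1,a.2)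
        - F₁ (τ,a.1,a.2) * pd2 U (τ,a.1,a.2) - F₂ (τ,a.1,a.2) * pd3 U (τ,a.1,a.2)) M := by
      refine hint cH fun p hp => ?_
      show F₀ (τ,p.1,p.2) * U (τ,p.1,p.2) - F₁ (τ,p.1,p.2) * pd2 U (τ,p.1,p.2)
        - F₂ (τ,p.1,p.2) * pd3 U (τ,p.1,p.2) = 0
      rw [pU _ (hlt p hp), pUX _ (hlt p hp), pUY _ (hlt p hp)]; ring
    have iPhix : Integrable (fun a : ℝ × ℝ => Phix b U F₁ (τ,a.1,a.2)) M := by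
      refine hint (cPhix.comp (cemb τ)) fun p hp => ?_
      exact pPhix _ (hlt p hp)
    have iPsiy : Integrable (fun a : ℝ × ℝ => Psiy U F₂ (τ,a.1,a.2)) M := by
      refine hint (cPsiy.comp (cemb τ)) fun p hp => ?_
      exact pPsiy _ (hlt p hp)
    have hsplit : (∫ a : ℝ × ℝ, 2 * U (τ,a.1,a.2) * pd1 U (τ,a.1,a.2) ∂M)
        = (∫ a : ℝ × ℝ, 2 * (F₀ (τ,a.1,a.2) * U (τ,a.1,a.2)
            - F₁ (τ,a.1,a.2) * pd2 U (τ,a.1,a.2) - F₂ (τ,a.1,a.2) * pd3 U (τ,a.1,a.2)) ∂M)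
          + (∫ a : ℝ × ℝ, Phix b U F₁ (τ,a.1,a.2) ∂M)
          + (∫ a : ℝ × ℝ, Psiy U F₂ (τ,a.1,a.2) ∂M) := by
      have e1 : (∫ a : ℝ × ℝ, 2 * U (τ,a.1,a.2) * pd1 U (τ,a.1,a.2) ∂M)
          = ∫ a : ℝ × ℝ, (2 * (F₀ (τ,a.1,a.2) * U (τ,a.1,a.2)
              - F₁ (τ,a.1,a.2) * pd2 U (τ,a.1,a.2) - F₂ (τ,a.1,a.2) * pd3 U (τ,a.1,a.2))
            + Phix b U F₁ (τ,a.1,a.2) + Psiy U F₂ (τ,a.1,a.2)) ∂M := by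
        refine integral_congr_ae ?_
        filter_upwards [hae] with a ha
        exact hpoint τ hτ a.1 a.2 (Ioo_subset_Icc_self ha)
      have e2 : (∫ a : ℝ × ℝ, (2 * (F₀ (τ,a.1,a.2) * U (τ,a.1,a.2)
              - F₁ (τ,a.1,a.2) * pd2 U (τ,a.1,a.2) - F₂ (τ,a.1,a.2) * pd3 U (τ,a.1,a.2))
            + Phix b U F₁ (τ,a.1,a.2) + Psiy U F₂ (τ,a.1,a.2)) ∂M)
          = (∫ a : ℝ × ℝ, (2 * (F₀ (τ,a.1,a.2) * U (τ,a.1,a.2)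
              - F₁ (τ,a.1,a.2) * pd2 U (τ,a.1,a.2) - F₂ (τ,a.1,a.2) * pd3 U (τ,a.1,a.2))
            + Phix b U F₁ (τ,a.1,a.2)) ∂M)
            + ∫ a : ℝ × ℝ, Psiy U F₂ (τ,a.1,a.2) ∂M :=
        integral_add ((iH.const_mul 2).add iPhix) iPsiy
      have e3 : (∫ a : ℝ × ℝ, (2 * (F₀ (τ,a.1,a.2) * U (τ,a.1,a.2)
              - F₁ (τ,a.1,a.2) * pd2 U (τ,a.1,a.2) - F₂ (τ,a.1,a.2) * pd3 U (τ,a.1,a.2))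
            + Phix b U F₁ (τ,a.1,a.2)) ∂M)
          = (∫ a : ℝ × ℝ, 2 * (F₀ (τ,a.1,a.2) * U (τ,a.1,a.2)
              - F₁ (τ,a.1,a.2) * pd2 U (τ,a.1,a.2) - F₂ (τ,a.1,a.2) * pd3 U (τ,a.1,a.2)) ∂M)
            + ∫ a : ℝ × ℝ, Phix b U F₁ (τ,a.1,a.2) ∂M :=
        integral_add (iH.const_mul 2) iPhix
      rw [e1, e2, e3]
    have hPhix0 : (∫ a : ℝ × ℝ, Phix b U F₁ (τ,a.1,a.2) ∂M) = 0 := by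
      have e2 : (∫ a : ℝ × ℝ, Phix b U F₁ (τ,a.1,a.2) ∂M)
          = ∫ y in Ioo (0:ℝ) L, (∫ x : ℝ, Phix b U F₁ (τ,x,y)) :=
        MeasureTheory.integral_prod_symm _ iPhix
      rw [e2]
      have hin : ∀ y : ℝ, (∫ x : ℝ, Phix b U F₁ (τ,x,y)) = 0 := by
        intro y
        refine integral_deriv_zero (g := fun x => Phi b U F₁ (τ,x,y))
          (R := R₀ + 1) (by linarith) (fun x => hasDerivAt_Phi hU hF₁ τ x y)
          (cPhix.comp (continuous_const.prodMk (continuous_id.prodMk continuous_const)))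
          fun x hx => ?_
        exact pPhi _ (lt_of_lt_of_le (lt_add_one R₀) hx)
      simp only [hin]
      simp
    have hPsiy0 : (∫ a : ℝ × ℝ, Psiy U F₂ (τ,a.1,a.2) ∂M) = 0 := by
      have e2 : (∫ a : ℝ × ℝ, Psiy U F₂ (τ,a.1,a.2) ∂M)
          = ∫ x : ℝ, (∫ y in Ioo (0:ℝ) L, Psiy U F₂ (τ,x,y)) :=
        MeasureTheory.integral_prod _ iPsiy
      rw [e2]
      have hin : ∀ x : ℝ, (∫ y in Ioo (0:ℝ) L, Psiy U F₂ (τ,x,y)) = 0 := by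
        intro x
        rw [← integral_Ioc_eq_integral_Ioo, ← intervalIntegral.integral_of_le hL.le,
          intervalIntegral.integral_eq_sub_of_hasDerivAt
            (fun y _ => hasDerivAt_Psi hU hF₂ τ x y)
            ((cPsiy.comp (continuous_const.prodMk
              (continuous_const.prodMk continuous_id))).intervalIntegrable _ _)]
        have e0 : Psi U F₂ (τ,x,0) = 0 := by
          simp [Psi, hbc0 τ x, hUX0 τ x]
        have eL : Psi U F₂ (τ,x,L) = 0 := by
          simp [Psi, hbcL τ x, hUXL τ x]
        rw [e0, eL, sub_zero]
      simp only [hin]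
      simp
    rw [hsplit, hPhix0, hPsiy0, add_zero, add_zero, MeasureTheory.integral_const_mul,
      MeasureTheory.integral_prod _ iH]
  -- final assembly
  intro t ht
  have hFTC := intervalIntegral.integral_eq_sub_of_hasDerivAt
    (f := fun s => ∫ a : ℝ × ℝ, (U (s,a.1,a.2)) ^ 2 ∂M)
    (f' := fun s => ∫ a : ℝ × ℝ, 2 * U (s,a.1,a.2) * pd1 U (s,a.1,a.2) ∂M)
    (fun s _ => hderivF s) (hcontG.intervalIntegrable 0 t)
  have hcongr : (∫ τ in (0:ℝ)..t, ∫ a : ℝ × ℝ, 2 * U (τ,a.1,a.2) * pd1 U (τ,a.1,a.2) ∂M)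
      = ∫ τ in (0:ℝ)..t, 2 * ∫ x : ℝ, ∫ y in Ioo (0:ℝ) L,
          (F₀ (τ,x,y) * U (τ,x,y) - F₁ (τ,x,y) * pd2 U (τ,x,y)
            - F₂ (τ,x,y) * pd3 U (τ,x,y)) := by
    apply intervalIntegral.integral_congr
    intro τ hτ
    rw [uIcc_of_le ht.1] at hτ
    exact hstepC τ ⟨hτ.1, hτ.2.trans ht.2⟩
  rw [intervalIntegral.integral_const_mul] at hcongr
  rw [hFrep t, hFrep 0, ← hcongr, hFTC]
  ring

/-- Energy identity in `L²` for smooth solutions of the linearized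
Zakharov–Kuznetsov equation `u_t + b u_x + u_xxx + u_xyy = f₀ + f₁ₓ + f₂_y`
on the strip with homogeneous Dirichlet boundary conditions. -/
theorem L2_energy_identity (L T b : ℝ) (hL : 0 < L) (hT : 0 < T)
    (u f₀ f₁ f₂ : ℝ → ℝ → ℝ → ℝ)
    (hu : ContDiff ℝ (⊤ : ℕ∞) (fun p : ℝ × ℝ × ℝ => u p.1 p.2.1 p.2.2))
    (hsupp : ∃ R > 0, ∀ t x y : ℝ, R ≤ |x| → u t x y = 0)
    (hbc0 : ∀ t x : ℝ, u t x 0 = 0) (hbcL : ∀ t x : ℝ, u t x L = 0)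
    (hf₀ : ContDiff ℝ 1 (fun p : ℝ × ℝ × ℝ => f₀ p.1 p.2.1 p.2.2))
    (hf₁ : ContDiff ℝ 1 (fun p : ℝ × ℝ × ℝ => f₁ p.1 p.2.1 p.2.2))
    (hf₂ : ContDiff ℝ 1 (fun p : ℝ × ℝ × ℝ => f₂ p.1 p.2.1 p.2.2))
    (heq : ∀ t ∈ Icc (0:ℝ) T, ∀ x : ℝ, ∀ y ∈ Icc (0:ℝ) L,
      Dt u t x y + b * Dx u t x y + Dx (Dx (Dx u)) t x y + Dx (Dy (Dy u)) t x y
        = f₀ t x y + Dx f₁ t x y + Dy f₂ t x y) :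
    ∀ t ∈ Icc (0:ℝ) T,
      (∫ x : ℝ, ∫ y in Ioo (0:ℝ) L, (u t x y) ^ 2)
        = (∫ x : ℝ, ∫ y in Ioo (0:ℝ) L, (u 0 x y) ^ 2)
          + 2 * ∫ τ in (0:ℝ)..t, ∫ x : ℝ, ∫ y in Ioo (0:ℝ) L,
              (f₀ τ x y * u τ x y - f₁ τ x y * Dx u τ x y - f₂ τ x y * Dy u τ x y) := by
  obtain ⟨R₀, hR₀, hsupp⟩ := hsupp
  have dU : Differentiable ℝ (fun p : ℝ × ℝ × ℝ => u p.1 p.2.1 p.2.2) :=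
    hu.differentiable (by norm_cast)
  -- bridges between `Dt, Dx, Dy` and `pd1, pd2, pd3`
  have bT : ∀ t x y : ℝ, Dt u t x y
      = pd1 (fun p : ℝ × ℝ × ℝ => u p.1 p.2.1 p.2.2) (t,x,y) :=
    fun t x y => (hasDerivAt_slice1 (dU ((t,x,y) : ℝ × ℝ × ℝ))).deriv
  have bX : ∀ t x y : ℝ, Dx u t x y
      = pd2 (fun p : ℝ × ℝ × ℝ => u p.1 p.2.1 p.2.2) (t,x,y) :=
    fun t x y => (hasDerivAt_slice2 (dU ((t,x,y) : ℝ × ℝ × ℝ))).deriv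
  have bY : ∀ t x y : ℝ, Dy u t x y
      = pd3 (fun p : ℝ × ℝ × ℝ => u p.1 p.2.1 p.2.2) (t,x,y) :=
    fun t x y => (hasDerivAt_slice3 (dU ((t,x,y) : ℝ × ℝ × ℝ))).deriv
  have bXX : ∀ t x y : ℝ, Dx (Dx u) t x y
      = pd2 (pd2 (fun p : ℝ × ℝ × ℝ => u p.1 p.2.1 p.2.2)) (t,x,y) := by
    intro t x y
    show deriv (fun s => Dx u t s y) x = _
    rw [show (fun s => Dx u t s y)
        = (fun s => pd2 (fun p : ℝ × ℝ × ℝ => u p.1 p.2.1 p.2.2) (t,s,y)) from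
      funext fun s => bX t s y]
    exact (hasDerivAt_slice2 (((contDiff_pd2 hu).differentiable (by norm_cast)) _)).deriv
  have bXXX : ∀ t x y : ℝ, Dx (Dx (Dx u)) t x y
      = pd2 (pd2 (pd2 (fun p : ℝ × ℝ × ℝ => u p.1 p.2.1 p.2.2))) (t,x,y) := by
    intro t x y
    show deriv (fun s => Dx (Dx u) t s y) x = _
    rw [show (fun s => Dx (Dx u) t s y)
        = (fun s => pd2 (pd2 (fun p : ℝ × ℝ × ℝ => u p.1 p.2.1 p.2.2)) (t,s,y)) from
      funext fun s => bXX t s y]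
    exact (hasDerivAt_slice2
      (((contDiff_pd2 (contDiff_pd2 hu)).differentiable (by norm_cast)) _)).deriv
  have bYY : ∀ t x y : ℝ, Dy (Dy u) t x y
      = pd3 (pd3 (fun p : ℝ × ℝ × ℝ => u p.1 p.2.1 p.2.2)) (t,x,y) := by
    intro t x y
    show deriv (fun s => Dy u t x s) y = _
    rw [show (fun s => Dy u t x s)
        = (fun s => pd3 (fun p : ℝ × ℝ × ℝ => u p.1 p.2.1 p.2.2) (t,x,s)) from
      funext fun s => bY t x s]
    exact (hasDerivAt_slice3 (((contDiff_pd3 hu).differentiable (by norm_cast)) _)).deriv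
  have bXYY : ∀ t x y : ℝ, Dx (Dy (Dy u)) t x y
      = pd2 (pd3 (pd3 (fun p : ℝ × ℝ × ℝ => u p.1 p.2.1 p.2.2))) (t,x,y) := by
    intro t x y
    show deriv (fun s => Dy (Dy u) t s y) x = _
    rw [show (fun s => Dy (Dy u) t s y)
        = (fun s => pd3 (pd3 (fun p : ℝ × ℝ × ℝ => u p.1 p.2.1 p.2.2)) (t,s,y)) from
      funext fun s => bYY t s y]
    exact (hasDerivAt_slice2
      (((contDiff_pd3 (contDiff_pd3 hu)).differentiable (by norm_cast)) _)).deriv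
  have bf1 : ∀ t x y : ℝ, Dx f₁ t x y
      = pd2 (fun p : ℝ × ℝ × ℝ => f₁ p.1 p.2.1 p.2.2) (t,x,y) :=
    fun t x y => (hasDerivAt_slice2 ((hf₁.differentiable one_ne_zero) ((t,x,y) : ℝ × ℝ × ℝ))).deriv
  have bf2 : ∀ t x y : ℝ, Dy f₂ t x y
      = pd3 (fun p : ℝ × ℝ × ℝ => f₂ p.1 p.2.1 p.2.2) (t,x,y) :=
    fun t x y => (hasDerivAt_slice3 ((hf₂.differentiable one_ne_zero) ((t,x,y) : ℝ × ℝ × ℝ))).deriv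
  have heq' : ∀ t ∈ Icc (0:ℝ) T, ∀ x : ℝ, ∀ y ∈ Icc (0:ℝ) L,
      pd1 (fun p : ℝ × ℝ × ℝ => u p.1 p.2.1 p.2.2) (t,x,y)
        + b * pd2 (fun p : ℝ × ℝ × ℝ => u p.1 p.2.1 p.2.2) (t,x,y)
        + pd2 (pd2 (pd2 (fun p : ℝ × ℝ × ℝ => u p.1 p.2.1 p.2.2))) (t,x,y)
        + pd2 (pd3 (pd3 (fun p : ℝ × ℝ × ℝ => u p.1 p.2.1 p.2.2))) (t,x,y)
      = (fun p : ℝ × ℝ × ℝ => f₀ p.1 p.2.1 p.2.2) (t,x,y)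
        + pd2 (fun p : ℝ × ℝ × ℝ => f₁ p.1 p.2.1 p.2.2) (t,x,y)
        + pd3 (fun p : ℝ × ℝ × ℝ => f₂ p.1 p.2.1 p.2.2) (t,x,y) := by
    intro t ht x y hy
    have he := heq t ht x y hy
    rw [bT t x y, bX t x y, bXXX t x y, bXYY t x y, bf1 t x y, bf2 t x y] at he
    exact he
  have key := main_aux L T b R₀ hL hT hR₀
    (fun p : ℝ × ℝ × ℝ => u p.1 p.2.1 p.2.2)
    (fun p : ℝ × ℝ × ℝ => f₀ p.1 p.2.1 p.2.2)
    (fun p : ℝ × ℝ × ℝ => f₁ p.1 p.2.1 p.2.2)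
    (fun p : ℝ × ℝ × ℝ => f₂ p.1 p.2.1 p.2.2)
    hu (fun p hp => hsupp p.1 p.2.1 p.2.2 hp)
    (fun t x => hbc0 t x) (fun t x => hbcL t x) hf₀ hf₁ hf₂ heq'
  intro t ht
  have hkey := key t ht
  simp only [bX, bY] at *
  exact hkey
end
end

section
/- Let L > 0, T > 0, b ∈ ℝ, δ > 0, and let ψ : ℝ → ℝ be a positive four times continuously differentiable function. Let u : [0,T] × ℝ × [0,L] → ℝ be infinitely differentiable, vanishing whenever |x| ≥ R for some R > 0, and satisfying u(t,x,0) = u(t,x,L) = u_yy(t,x,0) = u_yy(t,x,L) = 0 for all t, x. Let f₀, f₁, f₂ : [0,T] × ℝ × [0,L] → ℝ be continuously differentiable, and suppose u satisfies pointwise the equation u_t + b u_x + u_xxx + u_xyy + δ(u_xxxx + u_yyyy) = f₀ + ∂_x f₁ + ∂_y f₂. Then for every t ∈ [0,T]: ∬_Σ u²(t) ψ dx dy + ∫₀^t [ − b ∬_Σ u² ψ' + ∬_Σ (3 u_x² + u_y²) ψ' − ∬_Σ u² ψ''' + 2δ ∬_Σ (u_xx² + u_yy²) ψ − 4δ ∬_Σ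 u_x² ψ'' + δ ∬_Σ u² ψ⁽⁴⁾ ] dτ = ∬_Σ u²(0) ψ dx dy + ∫₀^t [ 2 ∬_Σ f₀ u ψ − 2 ∬_Σ ( f₁ (u ψ)_x + f₂ u_y ψ ) ] dτ. -/
open MeasureTheory Real Set

noncomputable section

/-- uncurried triple version -/
def T3 (g : ℝ → ℝ → ℝ → ℝ) : ℝ × ℝ × ℝ → ℝ := fun p => g p.1 p.2.1 p.2.2

namespace Aux

lemma lineT_hasDerivAt (x t y : ℝ) :
    HasDerivAt (fun s : ℝ => ((s, x, y) : ℝ × ℝ × ℝ)) (1, 0, 0) t :=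
  (hasDerivAt_id t).prodMk ((hasDerivAt_const t x).prodMk (hasDerivAt_const t y))

lemma lineX_hasDerivAt (t y x : ℝ) :
    HasDerivAt (fun s : ℝ => ((t, s, y) : ℝ × ℝ × ℝ)) (0, 1, 0) x :=
  (hasDerivAt_const x t).prodMk ((hasDerivAt_id x).prodMk (hasDerivAt_const x y))

lemma lineY_hasDerivAt (t x y : ℝ) :
    HasDerivAt (fun s : ℝ => ((t, x, s) : ℝ × ℝ × ℝ)) (0, 0, 1) y :=
  (hasDerivAt_const y t).prodMk ((hasDerivAt_const y x).prodMk (hasDerivAt_id y))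

variable {u : ℝ → ℝ → ℝ → ℝ}

lemma hasDerivAt_sliceT (hu : Differentiable ℝ (T3 u)) (t x y : ℝ) :
    HasDerivAt (fun s => u s x y) (fderiv ℝ (T3 u) (t, x, y) (1, 0, 0)) t :=
  by have := (hu (t, x, y)).hasFDerivAt.comp_hasDerivAt t (lineT_hasDerivAt x t y); exact this

lemma hasDerivAt_sliceX (hu : Differentiable ℝ (T3 u)) (t x y : ℝ) :
    HasDerivAt (fun s => u t s y) (fderiv ℝ (T3 u) (t, x, y) (0, 1, 0)) x :=
  by have := (hu (t, x, y)).hasFDerivAt.comp_hasDerivAt x (lineX_hasDerivAt t y x); exact this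

lemma hasDerivAt_sliceY (hu : Differentiable ℝ (T3 u)) (t x y : ℝ) :
    HasDerivAt (fun s => u t x s) (fderiv ℝ (T3 u) (t, x, y) (0, 0, 1)) y :=
  by have := (hu (t, x, y)).hasFDerivAt.comp_hasDerivAt y (lineY_hasDerivAt t x y); exact this

lemma Dt_eq (hu : Differentiable ℝ (T3 u)) (t x y : ℝ) :
    Dt u t x y = fderiv ℝ (T3 u) (t, x, y) (1, 0, 0) :=
  (hasDerivAt_sliceT hu t x y).deriv

lemma Dx_eq (hu : Differentiable ℝ (T3 u)) (t x y : ℝ) :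
    Dx u t x y = fderiv ℝ (T3 u) (t, x, y) (0, 1, 0) :=
  (hasDerivAt_sliceX hu t x y).deriv

lemma Dy_eq (hu : Differentiable ℝ (T3 u)) (t x y : ℝ) :
    Dy u t x y = fderiv ℝ (T3 u) (t, x, y) (0, 0, 1) :=
  (hasDerivAt_sliceY hu t x y).deriv

lemma hasDerivAt_Dt (hu : Differentiable ℝ (T3 u)) (t x y : ℝ) :
    HasDerivAt (fun s => u s x y) (Dt u t x y) t := by
  rw [Dt_eq hu]; exact hasDerivAt_sliceT hu t x y

lemma hasDerivAt_Dx (hu : Differentiable ℝ (T3 u)) (t x y : ℝ) :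
    HasDerivAt (fun s => u t s y) (Dx u t x y) x := by
  rw [Dx_eq hu]; exact hasDerivAt_sliceX hu t x y

lemma hasDerivAt_Dy (hu : Differentiable ℝ (T3 u)) (t x y : ℝ) :
    HasDerivAt (fun s => u t x s) (Dy u t x y) y := by
  rw [Dy_eq hu]; exact hasDerivAt_sliceY hu t x y

lemma contDiff_T3_D (hu : ContDiff ℝ (⊤ : ℕ∞) (T3 u)) (v : ℝ × ℝ × ℝ) :
    ContDiff ℝ (⊤ : ℕ∞) (fun p => fderiv ℝ (T3 u) p v) :=
  (hu.fderiv_right (by simp)).clm_apply contDiff_const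

lemma contDiff_T3_Dt (hu : ContDiff ℝ (⊤ : ℕ∞) (T3 u)) :
    ContDiff ℝ (⊤ : ℕ∞) (T3 (Dt u)) := by
  have : T3 (Dt u) = fun p => fderiv ℝ (T3 u) p (1, 0, 0) := by
    funext p
    exact Dt_eq (hu.differentiable (by simp)) p.1 p.2.1 p.2.2
  rw [this]; exact contDiff_T3_D hu _

lemma contDiff_T3_Dx (hu : ContDiff ℝ (⊤ : ℕ∞) (T3 u)) :
    ContDiff ℝ (⊤ : ℕ∞) (T3 (Dx u)) := by
  have : T3 (Dx u) = fun p => fderiv ℝ (T3 u) p (0, 1, 0) := by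
    funext p
    exact Dx_eq (hu.differentiable (by simp)) p.1 p.2.1 p.2.2
  rw [this]; exact contDiff_T3_D hu _

lemma contDiff_T3_Dy (hu : ContDiff ℝ (⊤ : ℕ∞) (T3 u)) :
    ContDiff ℝ (⊤ : ℕ∞) (T3 (Dy u)) := by
  have : T3 (Dy u) = fun p => fderiv ℝ (T3 u) p (0, 0, 1) := by
    funext p
    exact Dy_eq (hu.differentiable (by simp)) p.1 p.2.1 p.2.2
  rw [this]; exact contDiff_T3_D hu _

/-- continuity of Dx for C¹ functions -/
lemma continuous_T3_Dx_of_contDiffOne {f : ℝ → ℝ → ℝ → ℝ}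
    (hf : ContDiff ℝ 1 (T3 f)) : Continuous (T3 (Dx f)) := by
  have : T3 (Dx f) = fun p => fderiv ℝ (T3 f) p (0, 1, 0) := by
    funext p
    exact Dx_eq (hf.differentiable one_ne_zero) p.1 p.2.1 p.2.2
  rw [this]
  exact ((hf.fderiv_right (m := 0) (by norm_num)).clm_apply contDiff_const).continuous

lemma continuous_T3_Dy_of_contDiffOne {f : ℝ → ℝ → ℝ → ℝ}
    (hf : ContDiff ℝ 1 (T3 f)) : Continuous (T3 (Dy f)) := by
  have : T3 (Dy f) = fun p => fderiv ℝ (T3 f) p (0, 0, 1) := by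
    funext p
    exact Dy_eq (hf.differentiable one_ne_zero) p.1 p.2.1 p.2.2
  rw [this]
  exact ((hf.fderiv_right (m := 0) (by norm_num)).clm_apply contDiff_const).continuous

lemma fderiv_dir_hasDerivAt_X (hf'd : Differentiable ℝ (fderiv ℝ (T3 u)))
    (w : ℝ × ℝ × ℝ) (t x y : ℝ) :
    HasDerivAt (fun s => fderiv ℝ (T3 u) (t, s, y) w)
      (fderiv ℝ (fderiv ℝ (T3 u)) (t, x, y) (0, 1, 0) w) x := by
  have h2 : HasFDerivAt (fun p => ContinuousLinearMap.apply ℝ ℝ w (fderiv ℝ (T3 u) p))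
      ((ContinuousLinearMap.apply ℝ ℝ w).comp (fderiv ℝ (fderiv ℝ (T3 u)) (t, x, y)))
      (t, x, y) :=
    (ContinuousLinearMap.apply ℝ ℝ w).hasFDerivAt.comp (t, x, y)
      (hf'd (t, x, y)).hasFDerivAt
  simpa [Function.comp_def] using h2.comp_hasDerivAt x (lineX_hasDerivAt t y x)

lemma fderiv_dir_hasDerivAt_Y (hf'd : Differentiable ℝ (fderiv ℝ (T3 u)))
    (w : ℝ × ℝ × ℝ) (t x y : ℝ) :
    HasDerivAt (fun s => fderiv ℝ (T3 u) (t, x, s) w)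
      (fderiv ℝ (fderiv ℝ (T3 u)) (t, x, y) (0, 0, 1) w) y := by
  have h2 : HasFDerivAt (fun p => ContinuousLinearMap.apply ℝ ℝ w (fderiv ℝ (T3 u) p))
      ((ContinuousLinearMap.apply ℝ ℝ w).comp (fderiv ℝ (fderiv ℝ (T3 u)) (t, x, y)))
      (t, x, y) :=
    (ContinuousLinearMap.apply ℝ ℝ w).hasFDerivAt.comp (t, x, y)
      (hf'd (t, x, y)).hasFDerivAt
  simpa [Function.comp_def] using h2.comp_hasDerivAt y (lineY_hasDerivAt t x y)

/-- Schwarz symmetry -/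
lemma Dx_Dy_comm (hu : ContDiff ℝ (⊤ : ℕ∞) (T3 u)) : Dx (Dy u) = Dy (Dx u) := by
  funext t x y
  have hud : Differentiable ℝ (T3 u) := hu.differentiable (by simp)
  have hf'd : Differentiable ℝ (fderiv ℝ (T3 u)) :=
    (hu.fderiv_right (m := (⊤:ℕ∞)) (by simp)).differentiable (by simp)
  have hsym := second_derivative_symmetric_of_eventually_of_real
      (f := T3 u) (f' := fderiv ℝ (T3 u)) (f'' := fderiv ℝ (fderiv ℝ (T3 u)) (t, x, y))
      (x := (t, x, y))
      (Filter.Eventually.of_forall fun z => (hud z).hasFDerivAt)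
      (hf'd (t, x, y)).hasFDerivAt
  have e1 : Dx (Dy u) t x y = fderiv ℝ (fderiv ℝ (T3 u)) (t, x, y) (0, 1, 0) (0, 0, 1) := by
    have h4 : (fun s => Dy u t s y) = fun s => fderiv ℝ (T3 u) (t, s, y) (0, 0, 1) := by
      funext s; exact Dy_eq hud t s y
    rw [Dx, h4]
    exact (fderiv_dir_hasDerivAt_X hf'd _ t x y).deriv
  have e2 : Dy (Dx u) t x y = fderiv ℝ (fderiv ℝ (T3 u)) (t, x, y) (0, 0, 1) (0, 1, 0) := by
    have h4 : (fun s => Dx u t x s) = fun s => fderiv ℝ (T3 u) (t, x, s) (0, 1, 0) := by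
      funext s; exact Dx_eq hud t x s
    rw [Dy, h4]
    exact (fderiv_dir_hasDerivAt_Y hf'd _ t x y).deriv
  rw [e1, e2, hsym]



/-- the product measure on the strip -/
def nu (L : ℝ) : Measure (ℝ × ℝ) :=
  (volume : Measure ℝ).prod ((volume : Measure ℝ).restrict (Ioo 0 L))

variable {L R : ℝ}

lemma ae_snd_mem (hL : 0 < L) : ∀ᵐ p ∂(nu L), p.2 ∈ Ioo 0 L := by
  rw [MeasureTheory.ae_iff]
  refine measure_mono_null (fun p hp => ?_) (?_ : nu L ((univ : Set ℝ) ×ˢ (Ioo 0 L)ᶜ) = 0)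
  · exact ⟨trivial, hp⟩
  · rw [nu, Measure.prod_prod, Measure.restrict_apply (measurableSet_Ioo.compl)]
    simp

lemma indicator_integrable (hL : 0 < L) (C : ℝ) :
    Integrable ((Icc (-(R+1)) (R+1) ×ˢ (univ : Set ℝ)).indicator fun _ => C) (nu L) := by
  rw [integrable_indicator_iff (measurableSet_Icc.prod MeasurableSet.univ)]
  refine integrableOn_const (ne_of_lt ?_)
  rw [nu, Measure.prod_prod, Measure.restrict_apply MeasurableSet.univ]
  simp only [univ_inter, Real.volume_Icc, Real.volume_Ioo]
  exact ENNReal.mul_lt_top ENNReal.ofReal_lt_top ENNReal.ofReal_lt_top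

lemma norm_le_ind (hL : 0 < L) {h : ℝ × ℝ → ℝ} {C : ℝ} (hC0 : 0 ≤ C)
    (hb : ∀ p : ℝ × ℝ, |p.1| ≤ R + 1 → p.2 ∈ Icc 0 L → ‖h p‖ ≤ C)
    (hs : ∀ p : ℝ × ℝ, R < |p.1| → h p = 0) :
    ∀ᵐ p ∂(nu L), ‖h p‖ ≤ ((Icc (-(R+1)) (R+1) ×ˢ (univ : Set ℝ)).indicator fun _ => C) p := by
  filter_upwards [ae_snd_mem hL] with p hp
  by_cases hx : |p.1| ≤ R + 1
  · rw [Set.indicator_of_mem (by exact ⟨abs_le.1 hx, trivial⟩)]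
    exact hb p hx (Ioo_subset_Icc_self hp)
  · rw [hs p (by push_neg at hx; linarith [abs_nonneg p.1]), Set.indicator]
    split <;> simp [hC0]

lemma integrable_strip (hL : 0 < L) {g : ℝ → ℝ → ℝ}
    (hg : Continuous (Function.uncurry g)) (hs : ∀ x y, R < |x| → g x y = 0) :
    Integrable (Function.uncurry g) (nu L) := by
  obtain ⟨C, hC⟩ := (isCompact_Icc.prod isCompact_Icc).exists_bound_of_continuousOn
    (s := Icc (-(R+1)) (R+1) ×ˢ Icc 0 L) hg.continuousOn
  refine Integrable.mono' (indicator_integrable hL (max C 0)) hg.aestronglyMeasurable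
    (norm_le_ind hL (le_max_right _ _) (fun p h1 h2 => ?_) (fun p hp => hs p.1 p.2 hp))
  exact le_trans (hC p ⟨abs_le.1 h1, h2⟩) (le_max_left _ _)

lemma iter_eq_prod (hL : 0 < L) {g : ℝ → ℝ → ℝ}
    (hg : Continuous (Function.uncurry g)) (hs : ∀ x y, R < |x| → g x y = 0) :
    ∫ x : ℝ, ∫ y in Ioo (0:ℝ) L, g x y = ∫ p, g p.1 p.2 ∂(nu L) :=
  MeasureTheory.integral_integral (integrable_strip hL hg hs)

lemma iter_swap (hL : 0 < L) {g : ℝ → ℝ → ℝ}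
    (hg : Continuous (Function.uncurry g)) (hs : ∀ x y, R < |x| → g x y = 0) :
    ∫ x : ℝ, ∫ y in Ioo (0:ℝ) L, g x y = ∫ y in Ioo (0:ℝ) L, ∫ x : ℝ, g x y :=
  MeasureTheory.integral_integral_swap (integrable_strip hL hg hs)

lemma iter_add (hL : 0 < L) {f g : ℝ → ℝ → ℝ}
    (hf : Continuous (Function.uncurry f)) (hsf : ∀ x y, R < |x| → f x y = 0)
    (hg : Continuous (Function.uncurry g)) (hsg : ∀ x y, R < |x| → g x y = 0) :
    ∫ x : ℝ, ∫ y in Ioo (0:ℝ) L, (f x y + g x y)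
      = (∫ x : ℝ, ∫ y in Ioo (0:ℝ) L, f x y) + ∫ x : ℝ, ∫ y in Ioo (0:ℝ) L, g x y := by
  have h1 : ∫ x : ℝ, ∫ y in Ioo (0:ℝ) L, (f x y + g x y)
      = ∫ p, (f p.1 p.2 + g p.1 p.2) ∂(nu L) :=
    iter_eq_prod (R := R) hL (hf.add hg) (fun x y hx => by rw [hsf x y hx, hsg x y hx, add_zero])
  rw [h1, iter_eq_prod (R := R) hL hf hsf, iter_eq_prod (R := R) hL hg hsg,
    ]
  exact MeasureTheory.integral_add (integrable_strip hL hf hsf) (integrable_strip hL hg hsg)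

lemma iter_congr {f g : ℝ → ℝ → ℝ} (h : ∀ x y, f x y = g x y) :
    ∫ x : ℝ, ∫ y in Ioo (0:ℝ) L, f x y = ∫ x : ℝ, ∫ y in Ioo (0:ℝ) L, g x y := by
  congr 1; funext x; congr 1; funext y; exact h x y


section Param


lemma slice_cont {g : ℝ → ℝ → ℝ → ℝ} (hg : Continuous (T3 g)) (τ : ℝ) :
    Continuous (Function.uncurry fun x y => g τ x y) := by
  have : (Function.uncurry fun x y => g τ x y) = fun p : ℝ × ℝ => T3 g (τ, p.1, p.2) := rfl
  rw [this]; fun_prop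

lemma sup_bound {g : ℝ → ℝ → ℝ → ℝ} (hg : Continuous (T3 g)) (τ₀ : ℝ) :
    ∃ C : ℝ, 0 ≤ C ∧ ∀ τ ∈ Icc (τ₀ - 1) (τ₀ + 1), ∀ p : ℝ × ℝ,
      |p.1| ≤ R + 1 → p.2 ∈ Icc 0 L → ‖g τ p.1 p.2‖ ≤ C := by
  obtain ⟨C, hC⟩ := (isCompact_Icc.prod ((isCompact_Icc.prod isCompact_Icc))).exists_bound_of_continuousOn
    (s := Icc (τ₀ - 1) (τ₀ + 1) ×ˢ (Icc (-(R+1)) (R+1) ×ˢ Icc 0 L)) hg.continuousOn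
  exact ⟨max C 0, le_max_right _ _, fun τ hτ p h1 h2 =>
    le_trans (hC (τ, p.1, p.2) ⟨hτ, abs_le.1 h1, h2⟩) (le_max_left _ _)⟩

lemma cont_param (hL : 0 < L) {g : ℝ → ℝ → ℝ → ℝ} (hg : Continuous (T3 g))
    (hs : ∀ τ x y, R < |x| → g τ x y = 0) :
    Continuous (fun τ => ∫ x : ℝ, ∫ y in Ioo (0:ℝ) L, g τ x y) := by
  have heq : ∀ τ, (∫ x : ℝ, ∫ y in Ioo (0:ℝ) L, g τ x y) = ∫ p, g τ p.1 p.2 ∂(nu L) :=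
    fun τ => iter_eq_prod (R := R) hL (slice_cont hg τ) (fun x y => hs τ x y)
  simp only [heq]
  rw [continuous_iff_continuousAt]
  intro τ₀
  obtain ⟨C, hC0, hC⟩ := sup_bound (L := L) (R := R) hg τ₀
  apply MeasureTheory.continuousAt_of_dominated
    (bound := (Icc (-(R+1)) (R+1) ×ˢ (univ : Set ℝ)).indicator fun _ => C)
  · exact Filter.Eventually.of_forall fun τ =>
      (show Continuous fun p : ℝ × ℝ => g τ p.1 p.2 from slice_cont hg τ).aestronglyMeasurable
  · filter_upwards [Icc_mem_nhds (by linarith : τ₀ - 1 < τ₀) (by linarith : τ₀ < τ₀ + 1)] with τ hτ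
    exact norm_le_ind hL hC0 (fun p => hC τ hτ p) (fun p hp => hs τ p.1 p.2 hp)
  · exact indicator_integrable hL C
  · exact Filter.Eventually.of_forall fun p =>
      (hg.comp (continuous_id.prodMk continuous_const)).continuousAt

lemma hasDerivAt_param (hL : 0 < L) {g g' : ℝ → ℝ → ℝ → ℝ}
    (hg : Continuous (T3 g)) (hg' : Continuous (T3 g'))
    (hsg : ∀ τ x y, R < |x| → g τ x y = 0) (hsg' : ∀ τ x y, R < |x| → g' τ x y = 0)
    (hd : ∀ τ x y, HasDerivAt (fun s => g s x y) (g' τ x y) τ) (τ₀ : ℝ) :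
    HasDerivAt (fun τ => ∫ x : ℝ, ∫ y in Ioo (0:ℝ) L, g τ x y)
      (∫ x : ℝ, ∫ y in Ioo (0:ℝ) L, g' τ₀ x y) τ₀ := by
  have heq : ∀ τ, (∫ x : ℝ, ∫ y in Ioo (0:ℝ) L, g τ x y) = ∫ p, g τ p.1 p.2 ∂(nu L) :=
    fun τ => iter_eq_prod (R := R) hL (slice_cont hg τ) (fun x y => hsg τ x y)
  have heq' : (∫ x : ℝ, ∫ y in Ioo (0:ℝ) L, g' τ₀ x y) = ∫ p, g' τ₀ p.1 p.2 ∂(nu L) :=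
    iter_eq_prod (R := R) hL (slice_cont hg' τ₀) (fun x y => hsg' τ₀ x y)
  simp only [heq, heq']
  obtain ⟨C, hC0, hC⟩ := sup_bound (L := L) (R := R) hg' τ₀
  refine (hasDerivAt_integral_of_dominated_loc_of_deriv_le (μ := nu L)
    (F := fun τ p => g τ p.1 p.2) (F' := fun τ p => g' τ p.1 p.2)
    (bound := (Icc (-(R+1)) (R+1) ×ˢ (univ : Set ℝ)).indicator fun _ => C)
    (Metric.ball_mem_nhds τ₀ one_pos) ?_ ?_ ?_ ?_ ?_ ?_).2
  · exact Filter.Eventually.of_forall fun τ =>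
      (show Continuous fun p : ℝ × ℝ => g τ p.1 p.2 from slice_cont hg τ).aestronglyMeasurable
  · exact integrable_strip hL (slice_cont hg τ₀) (fun x y => hsg τ₀ x y)
  · exact (show Continuous fun p : ℝ × ℝ => g' τ₀ p.1 p.2 from slice_cont hg' τ₀).aestronglyMeasurable
  · filter_upwards [ae_snd_mem hL] with p hp
    intro τ hτ
    show ‖g' τ p.1 p.2‖ ≤ _
    have hτ' : τ ∈ Icc (τ₀ - 1) (τ₀ + 1) := by
      rw [Metric.mem_ball, Real.dist_eq, abs_lt] at hτ
      constructor <;> linarith [hτ.1, hτ.2]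
    by_cases hx : |p.1| ≤ R + 1
    · rw [Set.indicator_of_mem (by exact ⟨abs_le.1 hx, trivial⟩)]
      exact hC τ hτ' p hx (Ioo_subset_Icc_self hp)
    · rw [hsg' τ p.1 p.2 (by push_neg at hx; linarith [abs_nonneg p.1]), Set.indicator]
      simp only [norm_zero]; split <;> simp [hC0]
  · exact indicator_integrable hL C
  · exact Filter.Eventually.of_forall fun p τ _ => hd τ p.1 p.2

end Param



variable {L R : ℝ}

lemma integral_eq_intervalIntegral {h : ℝ → ℝ} {S : ℝ} (hS : 0 < S)
    (h0 : ∀ x, S ≤ |x| → h x = 0) : ∫ x : ℝ, h x = ∫ x in (-S)..S, h x := by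
  rw [intervalIntegral.integral_of_le (by linarith), integral_Ioc_eq_integral_Ioo]
  exact (setIntegral_eq_integral_of_forall_compl_eq_zero (fun x hx => by
    apply h0
    simp only [mem_Ioo, not_and_or, not_lt] at hx
    rcases hx with h2 | h2
    · exact le_trans (by linarith) (neg_le_abs x)
    · exact le_trans h2 (le_abs_self x))).symm

/-- derivative of a function vanishing for large `|x|` also vanishes there -/
lemma deriv_vanish {F F' : ℝ → ℝ} (hdF : ∀ x, HasDerivAt F (F' x) x)
    (hs : ∀ x, R < |x| → F x = 0) : ∀ x, R < |x| → F' x = 0 := by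
  intro x hx
  have hev : F =ᶠ[nhds x] fun _ => 0 := by
    filter_upwards [(isOpen_lt continuous_const continuous_abs).mem_nhds hx] with z hz
    exact hs z hz
  rw [← (hdF x).deriv, hev.deriv_eq, deriv_const]

/-- Integration by parts on the line, `F` compactly supported. -/
lemma ibp_line {F G F' G' : ℝ → ℝ}
    (hdF : ∀ x, HasDerivAt F (F' x) x) (hdG : ∀ x, HasDerivAt G (G' x) x)
    (hF' : Continuous F') (hG' : Continuous G')
    (hs : ∀ x, R < |x| → F x = 0) :
    ∫ x : ℝ, F' x * G x = - ∫ x : ℝ, F x * G' x := by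
  have hFc : Continuous F := by
    rw [continuous_iff_continuousAt]; exact fun x => (hdF x).continuousAt
  have hGc : Continuous G := by
    rw [continuous_iff_continuousAt]; exact fun x => (hdG x).continuousAt
  have hsF' := deriv_vanish hdF hs
  set S : ℝ := max R 0 + 1 with hSdef
  have hS : 0 < S := by positivity
  have hRS : R < S := by
    have := le_max_left R 0; simp only [hSdef]; linarith
  have hFS : ∀ x, S ≤ |x| → F x = 0 := fun x hx => hs x (lt_of_lt_of_le hRS hx)
  have h1 : ∫ x : ℝ, F' x * G x = ∫ x in (-S)..S, F' x * G x :=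
    integral_eq_intervalIntegral hS fun x hx => by
      rw [hsF' x (lt_of_lt_of_le hRS hx), zero_mul]
  have h2 : ∫ x : ℝ, F x * G' x = ∫ x in (-S)..S, F x * G' x :=
    integral_eq_intervalIntegral hS fun x hx => by
      rw [hFS x hx, zero_mul]
  have key : ∫ x in (-S)..S, F' x * G x + F x * G' x = F S * G S - F (-S) * G (-S) :=
    intervalIntegral.integral_deriv_mul_eq_sub (fun x _ => hdF x) (fun x _ => hdG x)
      (hF'.intervalIntegrable _ _) (hG'.intervalIntegrable _ _)
  rw [intervalIntegral.integral_add (f := fun x => F' x * G x) (g := fun x => F x * G' x) ((hF'.mul hGc).intervalIntegrable _ _)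
      ((hFc.mul hG').intervalIntegrable _ _)] at key
  rw [hFS S (by rw [abs_of_pos hS]), hFS (-S) (by rw [abs_neg, abs_of_pos hS]),
    zero_mul, zero_mul, sub_zero] at key
  rw [h1, h2]
  linarith [key]

/-- Integration by parts on `(0, L)`. -/
lemma ibp_y {F G F' G' : ℝ → ℝ} (hL : 0 < L)
    (hdF : ∀ y, HasDerivAt F (F' y) y) (hdG : ∀ y, HasDerivAt G (G' y) y)
    (hF' : Continuous F') (hG' : Continuous G') :
    ∫ y in Ioo (0:ℝ) L, F' y * G y
      = F L * G L - F 0 * G 0 - ∫ y in Ioo (0:ℝ) L, F y * G' y := by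
  have hFc : Continuous F := by
    rw [continuous_iff_continuousAt]; exact fun x => (hdF x).continuousAt
  have hGc : Continuous G := by
    rw [continuous_iff_continuousAt]; exact fun x => (hdG x).continuousAt
  have e1 : ∫ y in Ioo (0:ℝ) L, F' y * G y = ∫ y in (0:ℝ)..L, F' y * G y := by
    rw [intervalIntegral.integral_of_le hL.le, integral_Ioc_eq_integral_Ioo]
  have e2 : ∫ y in Ioo (0:ℝ) L, F y * G' y = ∫ y in (0:ℝ)..L, F y * G' y := by
    rw [intervalIntegral.integral_of_le hL.le, integral_Ioc_eq_integral_Ioo]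
  have key : ∫ y in (0:ℝ)..L, F' y * G y + F y * G' y = F L * G L - F 0 * G 0 :=
    intervalIntegral.integral_deriv_mul_eq_sub (fun x _ => hdF x) (fun x _ => hdG x)
      (hF'.intervalIntegrable _ _) (hG'.intervalIntegrable _ _)
  rw [intervalIntegral.integral_add (f := fun x => F' x * G x) (g := fun x => F x * G' x) ((hF'.mul hGc).intervalIntegrable _ _)
      ((hFc.mul hG').intervalIntegrable _ _)] at key
  rw [e1, e2]
  linarith [key]


section IBP2

variable {L R : ℝ}

lemma xibp2 (hL : 0 < L) {F G F' G' : ℝ → ℝ → ℝ}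
    (hF : Continuous (Function.uncurry F)) (hF' : Continuous (Function.uncurry F'))
    (hG : Continuous (Function.uncurry G)) (hG' : Continuous (Function.uncurry G'))
    (hdF : ∀ x y, HasDerivAt (fun s => F s y) (F' x y) x)
    (hdG : ∀ x y, HasDerivAt (fun s => G s y) (G' x y) x)
    (hs : ∀ x y, R < |x| → F x y = 0) :
    ∫ x : ℝ, ∫ y in Ioo (0:ℝ) L, F' x y * G x y
      = - ∫ x : ℝ, ∫ y in Ioo (0:ℝ) L, F x y * G' x y := by
  have hsF' : ∀ x y, R < |x| → F' x y = 0 := fun x y hx =>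
    deriv_vanish (F := fun s => F s y) (fun s => hdF s y) (fun s hsx => hs s y hsx) x hx
  have hcFG' : Continuous (Function.uncurry fun x y => F x y * G' x y) := hF.mul hG'
  have hcF'G : Continuous (Function.uncurry fun x y => F' x y * G x y) := hF'.mul hG
  rw [iter_swap (R := R) hL hcF'G (fun x y hx => by rw [hsF' x y hx, zero_mul]),
    iter_swap (R := R) hL hcFG' (fun x y hx => by rw [hs x y hx, zero_mul])]
  rw [← MeasureTheory.integral_neg]
  apply MeasureTheory.integral_congr_ae
  apply Filter.Eventually.of_forall
  intro y
  exact ibp_line (fun x => hdF x y) (fun x => hdG x y)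
    (hF'.comp (continuous_id.prodMk continuous_const))
    (hG'.comp (continuous_id.prodMk continuous_const))
    (fun x hx => hs x y hx)

lemma yibp2 (hL : 0 < L) {F G F' G' : ℝ → ℝ → ℝ}
    (hF' : Continuous (Function.uncurry F')) (hG' : Continuous (Function.uncurry G'))
    (hdF : ∀ x y, HasDerivAt (fun s => F x s) (F' x y) y)
    (hdG : ∀ x y, HasDerivAt (fun s => G x s) (G' x y) y)
    (hb : ∀ x, F x L * G x L - F x 0 * G x 0 = 0) :
    ∫ x : ℝ, ∫ y in Ioo (0:ℝ) L, F' x y * G x y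
      = - ∫ x : ℝ, ∫ y in Ioo (0:ℝ) L, F x y * G' x y := by
  rw [← MeasureTheory.integral_neg]
  apply MeasureTheory.integral_congr_ae
  apply Filter.Eventually.of_forall
  intro x
  show (∫ y in Ioo (0:ℝ) L, F' x y * G x y) = -∫ y in Ioo (0:ℝ) L, F x y * G' x y
  rw [ibp_y hL (fun y => hdF x y) (fun y => hdG x y)
    (hF'.comp (continuous_const.prodMk continuous_id))
    (hG'.comp (continuous_const.prodMk continuous_id)), hb x]
  ring


lemma xibp_phi (hL : 0 < L) {v v' : ℝ → ℝ → ℝ} {φ φ' : ℝ → ℝ}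
    (hv : Continuous (Function.uncurry v)) (hv' : Continuous (Function.uncurry v'))
    (hφ : Continuous φ) (hφ' : Continuous φ')
    (hdv : ∀ x y, HasDerivAt (fun s => v s y) (v' x y) x)
    (hdφ : ∀ x, HasDerivAt φ (φ' x) x)
    (hsv : ∀ x y, R < |x| → v x y = 0) :
    ∫ x : ℝ, ∫ y in Ioo (0:ℝ) L, v' x y * φ x
      = - ∫ x : ℝ, ∫ y in Ioo (0:ℝ) L, v x y * φ' x :=
  xibp2 (R := R) hL hv hv' (hφ.comp continuous_fst) (hφ'.comp continuous_fst)
    hdv (fun x _ => hdφ x) hsv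

lemma xibp_mul (hL : 0 < L) {v v' w w' : ℝ → ℝ → ℝ} {φ φ' : ℝ → ℝ}
    (hv : Continuous (Function.uncurry v)) (hv' : Continuous (Function.uncurry v'))
    (hw : Continuous (Function.uncurry w)) (hw' : Continuous (Function.uncurry w'))
    (hφ : Continuous φ) (hφ' : Continuous φ')
    (hdv : ∀ x y, HasDerivAt (fun s => v s y) (v' x y) x)
    (hdw : ∀ x y, HasDerivAt (fun s => w s y) (w' x y) x)
    (hdφ : ∀ x, HasDerivAt φ (φ' x) x)
    (hsv : ∀ x y, R < |x| → v x y = 0) :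
    ∫ x : ℝ, ∫ y in Ioo (0:ℝ) L, v' x y * (w x y * φ x)
      = - ∫ x : ℝ, ∫ y in Ioo (0:ℝ) L, v x y * (w' x y * φ x + w x y * φ' x) :=
  xibp2 (R := R) hL hv hv' (hw.mul (hφ.comp continuous_fst))
    ((hw'.mul (hφ.comp continuous_fst)).add (hw.mul (hφ'.comp continuous_fst)))
    hdv (fun x y => (hdw x y).mul (hdφ x)) hsv

lemma xibp_flip (hL : 0 < L) {A A' B B' : ℝ → ℝ → ℝ}
    (hA : Continuous (Function.uncurry A)) (hA' : Continuous (Function.uncurry A'))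
    (hB : Continuous (Function.uncurry B)) (hB' : Continuous (Function.uncurry B'))
    (hdA : ∀ x y, HasDerivAt (fun s => A s y) (A' x y) x)
    (hdB : ∀ x y, HasDerivAt (fun s => B s y) (B' x y) x)
    (hsB : ∀ x y, R < |x| → B x y = 0) :
    ∫ x : ℝ, ∫ y in Ioo (0:ℝ) L, A' x y * B x y
      = - ∫ x : ℝ, ∫ y in Ioo (0:ℝ) L, A x y * B' x y := by
  have h := xibp2 (R := R) hL hB hB' hA hA' hdB hdA hsB
  rw [iter_congr (f := fun x y => A' x y * B x y) (g := fun x y => B x y * A' x y)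
      (fun x y => mul_comm _ _),
    iter_congr (f := fun x y => A x y * B' x y) (g := fun x y => B' x y * A x y)
      (fun x y => mul_comm _ _)]
  linarith [h]

lemma yibp_mul (hL : 0 < L) {v v' w w' : ℝ → ℝ → ℝ} {φ : ℝ → ℝ}
    (hv' : Continuous (Function.uncurry v')) (hw : Continuous (Function.uncurry w))
    (hw' : Continuous (Function.uncurry w')) (hφ : Continuous φ)
    (hdv : ∀ x y, HasDerivAt (fun s => v x s) (v' x y) y)
    (hdw : ∀ x y, HasDerivAt (fun s => w x s) (w' x y) y)
    (hb : ∀ x, v x L * (w x L * φ x) - v x 0 * (w x 0 * φ x) = 0) :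
    ∫ x : ℝ, ∫ y in Ioo (0:ℝ) L, v' x y * (w x y * φ x)
      = - ∫ x : ℝ, ∫ y in Ioo (0:ℝ) L, v x y * (w' x y * φ x) :=
  yibp2 hL hv' (hw'.mul (hφ.comp continuous_fst))
    hdv (fun x y => (hdw x y).mul_const (φ x)) hb

end IBP2

section Supp

variable {R : ℝ} {u : ℝ → ℝ → ℝ → ℝ}

lemma supp_Dt (h : ∀ t x y, R < |x| → u t x y = 0) :
    ∀ t x y, R < |x| → Dt u t x y = 0 := by
  intro t x y hx
  rw [Dt, show (fun s => u s x y) = fun _ => (0:ℝ) from funext fun s => h s x y hx, deriv_const]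

lemma supp_Dy (h : ∀ t x y, R < |x| → u t x y = 0) :
    ∀ t x y, R < |x| → Dy u t x y = 0 := by
  intro t x y hx
  rw [Dy, show (fun s => u t x s) = fun _ => (0:ℝ) from funext fun s => h t x s hx, deriv_const]

lemma supp_Dx (h : ∀ t x y, R < |x| → u t x y = 0) :
    ∀ t x y, R < |x| → Dx u t x y = 0 := by
  intro t x y hx
  have hev : (fun s => u t s y) =ᶠ[nhds x] fun _ => 0 := by
    filter_upwards [(isOpen_lt continuous_const continuous_abs).mem_nhds hx] with z hz
    exact h t z y hz
  rw [Dx, hev.deriv_eq, deriv_const]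

lemma Dx_of_bc {c : ℝ} (h : ∀ t x, u t x c = 0) : ∀ t x, Dx u t x c = 0 := fun t x => by
  rw [Dx, show (fun s => u t s c) = fun _ => (0:ℝ) from funext fun s => h t s, deriv_const]

lemma Dt_of_bc {c : ℝ} (h : ∀ t x, u t x c = 0) : ∀ t x, Dt u t x c = 0 := fun t x => by
  rw [Dt, show (fun s => u s x c) = fun _ => (0:ℝ) from funext fun s => h s x, deriv_const]

end Supp

lemma iter_smul {L : ℝ} (c : ℝ) (f : ℝ → ℝ → ℝ) :
    ∫ x : ℝ, ∫ y in Ioo (0:ℝ) L, c * f x y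
      = c * ∫ x : ℝ, ∫ y in Ioo (0:ℝ) L, f x y := by
  rw [← MeasureTheory.integral_const_mul]
  congr 1; funext x
  exact MeasureTheory.integral_const_mul c fun y => f x y

lemma iter_congr_on {L : ℝ} {f g : ℝ → ℝ → ℝ}
    (h : ∀ x : ℝ, ∀ y ∈ Ioo (0:ℝ) L, f x y = g x y) :
    ∫ x : ℝ, ∫ y in Ioo (0:ℝ) L, f x y = ∫ x : ℝ, ∫ y in Ioo (0:ℝ) L, g x y := by
  congr 1; funext x
  exact setIntegral_congr_fun measurableSet_Ioo (fun y hy => h x y hy)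

lemma cslice {v : ℝ → ℝ → ℝ → ℝ} (hv : Continuous (T3 v)) (τ : ℝ) :
    Continuous fun p : ℝ × ℝ => v τ p.1 p.2 :=
  hv.comp (continuous_const.prodMk continuous_id)

section Combo

variable {L R : ℝ}

lemma iter_sub (hL : 0 < L) {f g : ℝ → ℝ → ℝ}
    (hf : Continuous (Function.uncurry f)) (hsf : ∀ x y, R < |x| → f x y = 0)
    (hg : Continuous (Function.uncurry g)) (hsg : ∀ x y, R < |x| → g x y = 0) :
    ∫ x : ℝ, ∫ y in Ioo (0:ℝ) L, (f x y - g x y)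
      = (∫ x : ℝ, ∫ y in Ioo (0:ℝ) L, f x y) - ∫ x : ℝ, ∫ y in Ioo (0:ℝ) L, g x y := by
  have h1 : ∫ x : ℝ, ∫ y in Ioo (0:ℝ) L, (f x y - g x y)
      = ∫ p, (f p.1 p.2 - g p.1 p.2) ∂(nu L) :=
    iter_eq_prod (R := R) hL (hf.sub hg) (fun x y hx => by rw [hsf x y hx, hsg x y hx, sub_zero])
  rw [h1, iter_eq_prod (R := R) hL hf hsf, iter_eq_prod (R := R) hL hg hsg]
  exact MeasureTheory.integral_sub (integrable_strip hL hf hsf) (integrable_strip hL hg hsg)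

lemma iter_factor (hL : 0 < L) (c : ℝ) {g f : ℝ → ℝ → ℝ} (h : ∀ x y, g x y = c * f x y) :
    ∫ x : ℝ, ∫ y in Ioo (0:ℝ) L, g x y = c * ∫ x : ℝ, ∫ y in Ioo (0:ℝ) L, f x y := by
  rw [iter_congr h]; exact iter_smul c f

lemma iter_mul_add_split (hL : 0 < L) {v a c : ℝ → ℝ → ℝ}
    (hv : Continuous (Function.uncurry v)) (ha : Continuous (Function.uncurry a))
    (hc : Continuous (Function.uncurry c)) (hsv : ∀ x y, R < |x| → v x y = 0) :
    ∫ x : ℝ, ∫ y in Ioo (0:ℝ) L, v x y * (a x y + c x y)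
      = (∫ x : ℝ, ∫ y in Ioo (0:ℝ) L, v x y * a x y)
        + ∫ x : ℝ, ∫ y in Ioo (0:ℝ) L, v x y * c x y := by
  rw [iter_congr (f := fun x y => v x y * (a x y + c x y))
    (g := fun x y => v x y * a x y + v x y * c x y) (fun x y => by ring)]
  exact iter_add (R := R) hL (hv.mul ha) (fun x y hx => by rw [hsv x y hx, zero_mul])
    (hv.mul hc) (fun x y hx => by rw [hsv x y hx, zero_mul])

lemma iter_split8 (hL : 0 < L) {f0 f1 f2 fb f3 f4 f5 f6 : ℝ → ℝ → ℝ}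
    (c0 : Continuous (Function.uncurry f0)) (s0 : ∀ x y, R < |x| → f0 x y = 0)
    (c1 : Continuous (Function.uncurry f1)) (s1 : ∀ x y, R < |x| → f1 x y = 0)
    (c2 : Continuous (Function.uncurry f2)) (s2 : ∀ x y, R < |x| → f2 x y = 0)
    (cb : Continuous (Function.uncurry fb)) (sb : ∀ x y, R < |x| → fb x y = 0)
    (c3 : Continuous (Function.uncurry f3)) (s3 : ∀ x y, R < |x| → f3 x y = 0)
    (c4 : Continuous (Function.uncurry f4)) (s4 : ∀ x y, R < |x| → f4 x y = 0)
    (c5 : Continuous (Function.uncurry f5)) (s5 : ∀ x y, R < |x| → f5 x y = 0)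
    (c6 : Continuous (Function.uncurry f6)) (s6 : ∀ x y, R < |x| → f6 x y = 0) :
    ∫ x : ℝ, ∫ y in Ioo (0:ℝ) L,
        (f0 x y + f1 x y + f2 x y - fb x y - f3 x y - f4 x y - f5 x y - f6 x y)
      = (∫ x : ℝ, ∫ y in Ioo (0:ℝ) L, f0 x y) + (∫ x : ℝ, ∫ y in Ioo (0:ℝ) L, f1 x y)
        + (∫ x : ℝ, ∫ y in Ioo (0:ℝ) L, f2 x y) - (∫ x : ℝ, ∫ y in Ioo (0:ℝ) L, fb x y)
        - (∫ x : ℝ, ∫ y in Ioo (0:ℝ) L, f3 x y) - (∫ x : ℝ, ∫ y in Ioo (0:ℝ) L, f4 x y)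
        - (∫ x : ℝ, ∫ y in Ioo (0:ℝ) L, f5 x y) - ∫ x : ℝ, ∫ y in Ioo (0:ℝ) L, f6 x y := by
  have c01 : Continuous (Function.uncurry fun x y => f0 x y + f1 x y) := c0.add c1
  have s01 : ∀ x y, R < |x| → f0 x y + f1 x y = 0 := fun x y hx => by
    rw [s0 x y hx, s1 x y hx]; ring
  have c012 : Continuous (Function.uncurry fun x y => f0 x y + f1 x y + f2 x y) := c01.add c2
  have s012 : ∀ x y, R < |x| → f0 x y + f1 x y + f2 x y = 0 := fun x y hx => by
    rw [s0 x y hx, s1 x y hx, s2 x y hx]; ring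
  have cA : Continuous (Function.uncurry fun x y => f0 x y + f1 x y + f2 x y - fb x y) :=
    c012.sub cb
  have sA : ∀ x y, R < |x| → f0 x y + f1 x y + f2 x y - fb x y = 0 := fun x y hx => by
    rw [s0 x y hx, s1 x y hx, s2 x y hx, sb x y hx]; ring
  have cB : Continuous (Function.uncurry fun x y =>
      f0 x y + f1 x y + f2 x y - fb x y - f3 x y) := cA.sub c3
  have sB : ∀ x y, R < |x| → f0 x y + f1 x y + f2 x y - fb x y - f3 x y = 0 :=
    fun x y hx => by rw [s0 x y hx, s1 x y hx, s2 x y hx, sb x y hx, s3 x y hx]; ring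
  have cC : Continuous (Function.uncurry fun x y =>
      f0 x y + f1 x y + f2 x y - fb x y - f3 x y - f4 x y) := cB.sub c4
  have sC : ∀ x y, R < |x| → f0 x y + f1 x y + f2 x y - fb x y - f3 x y - f4 x y = 0 :=
    fun x y hx => by
      rw [s0 x y hx, s1 x y hx, s2 x y hx, sb x y hx, s3 x y hx, s4 x y hx]; ring
  have cD : Continuous (Function.uncurry fun x y =>
      f0 x y + f1 x y + f2 x y - fb x y - f3 x y - f4 x y - f5 x y) := cC.sub c5
  have sD : ∀ x y, R < |x| →
      f0 x y + f1 x y + f2 x y - fb x y - f3 x y - f4 x y - f5 x y = 0 := fun x y hx => by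
    rw [s0 x y hx, s1 x y hx, s2 x y hx, sb x y hx, s3 x y hx, s4 x y hx, s5 x y hx]; ring
  have t1 : ∫ x : ℝ, ∫ y in Ioo (0:ℝ) L, (f0 x y + f1 x y)
      = (∫ x : ℝ, ∫ y in Ioo (0:ℝ) L, f0 x y) + ∫ x : ℝ, ∫ y in Ioo (0:ℝ) L, f1 x y :=
    iter_add (R := R) hL c0 s0 c1 s1
  have t2 : ∫ x : ℝ, ∫ y in Ioo (0:ℝ) L, (f0 x y + f1 x y + f2 x y)
      = (∫ x : ℝ, ∫ y in Ioo (0:ℝ) L, (f0 x y + f1 x y))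
        + ∫ x : ℝ, ∫ y in Ioo (0:ℝ) L, f2 x y :=
    iter_add (R := R) hL c01 s01 c2 s2
  have t3 : ∫ x : ℝ, ∫ y in Ioo (0:ℝ) L, (f0 x y + f1 x y + f2 x y - fb x y)
      = (∫ x : ℝ, ∫ y in Ioo (0:ℝ) L, (f0 x y + f1 x y + f2 x y))
        - ∫ x : ℝ, ∫ y in Ioo (0:ℝ) L, fb x y :=
    iter_sub (R := R) hL c012 s012 cb sb
  have t4 : ∫ x : ℝ, ∫ y in Ioo (0:ℝ) L, (f0 x y + f1 x y + f2 x y - fb x y - f3 x y)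
      = (∫ x : ℝ, ∫ y in Ioo (0:ℝ) L, (f0 x y + f1 x y + f2 x y - fb x y))
        - ∫ x : ℝ, ∫ y in Ioo (0:ℝ) L, f3 x y :=
    iter_sub (R := R) hL cA sA c3 s3
  have t5 : ∫ x : ℝ, ∫ y in Ioo (0:ℝ) L,
        (f0 x y + f1 x y + f2 x y - fb x y - f3 x y - f4 x y)
      = (∫ x : ℝ, ∫ y in Ioo (0:ℝ) L, (f0 x y + f1 x y + f2 x y - fb x y - f3 x y))
        - ∫ x : ℝ, ∫ y in Ioo (0:ℝ) L, f4 x y :=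
    iter_sub (R := R) hL cB sB c4 s4
  have t6 : ∫ x : ℝ, ∫ y in Ioo (0:ℝ) L,
        (f0 x y + f1 x y + f2 x y - fb x y - f3 x y - f4 x y - f5 x y)
      = (∫ x : ℝ, ∫ y in Ioo (0:ℝ) L, (f0 x y + f1 x y + f2 x y - fb x y - f3 x y - f4 x y))
        - ∫ x : ℝ, ∫ y in Ioo (0:ℝ) L, f5 x y :=
    iter_sub (R := R) hL cC sC c5 s5
  have t7 : ∫ x : ℝ, ∫ y in Ioo (0:ℝ) L,
        (f0 x y + f1 x y + f2 x y - fb x y - f3 x y - f4 x y - f5 x y - f6 x y)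
      = (∫ x : ℝ, ∫ y in Ioo (0:ℝ) L,
          (f0 x y + f1 x y + f2 x y - fb x y - f3 x y - f4 x y - f5 x y))
        - ∫ x : ℝ, ∫ y in Ioo (0:ℝ) L, f6 x y :=
    iter_sub (R := R) hL cD sD c6 s6
  rw [t7, t6, t5, t4, t3, t2, t1]

end Combo

end Aux

open Aux

/-- Weighted `L²` energy identity for smooth solutions of the regularized linear
equation `u_t + b u_x + u_xxx + u_xyy + δ(u_xxxx + u_yyyy) = f₀ + f₁ₓ + f₂_y`. -/
theorem weighted_energy_identity (L T b δ : ℝ) (hL : 0 < L) (hT : 0 < T) (hδ : 0 < δ)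
    (ψ : ℝ → ℝ) (hψ : ContDiff ℝ 4 ψ) (hψpos : ∀ x : ℝ, 0 < ψ x)
    (u f₀ f₁ f₂ : ℝ → ℝ → ℝ → ℝ)
    (hu : ContDiff ℝ (⊤ : ℕ∞) (fun p : ℝ × ℝ × ℝ => u p.1 p.2.1 p.2.2))
    (hsupp : ∃ R > 0, ∀ t x y : ℝ, R ≤ |x| → u t x y = 0)
    (hbc0 : ∀ t x : ℝ, u t x 0 = 0) (hbcL : ∀ t x : ℝ, u t x L = 0)
    (hbcyy0 : ∀ t x : ℝ, Dy (Dy u) t x 0 = 0) (hbcyyL : ∀ t x : ℝ, Dy (Dy u) t x L = 0)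
    (hf₀ : ContDiff ℝ 1 (fun p : ℝ × ℝ × ℝ => f₀ p.1 p.2.1 p.2.2))
    (hf₁ : ContDiff ℝ 1 (fun p : ℝ × ℝ × ℝ => f₁ p.1 p.2.1 p.2.2))
    (hf₂ : ContDiff ℝ 1 (fun p : ℝ × ℝ × ℝ => f₂ p.1 p.2.1 p.2.2))
    (heq : ∀ t ∈ Icc (0:ℝ) T, ∀ x : ℝ, ∀ y ∈ Icc (0:ℝ) L,
      Dt u t x y + b * Dx u t x y + Dx (Dx (Dx u)) t x y + Dx (Dy (Dy u)) t x y
          + δ * (Dx (Dx (Dx (Dx u))) t x y + Dy (Dy (Dy (Dy u))) t x y)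
        = f₀ t x y + Dx f₁ t x y + Dy f₂ t x y) :
    ∀ t ∈ Icc (0:ℝ) T,
      (∫ x : ℝ, ∫ y in Ioo (0:ℝ) L, (u t x y) ^ 2 * ψ x)
        + (∫ τ in (0:ℝ)..t,
            (-(b * ∫ x : ℝ, ∫ y in Ioo (0:ℝ) L, (u τ x y) ^ 2 * deriv ψ x)
              + (∫ x : ℝ, ∫ y in Ioo (0:ℝ) L,
                  (3 * (Dx u τ x y) ^ 2 + (Dy u τ x y) ^ 2) * deriv ψ x)
              - (∫ x : ℝ, ∫ y in Ioo (0:ℝ) L, (u τ x y) ^ 2 * iteratedDeriv 3 ψ x)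
              + 2 * δ * (∫ x : ℝ, ∫ y in Ioo (0:ℝ) L,
                  ((Dx (Dx u) τ x y) ^ 2 + (Dy (Dy u) τ x y) ^ 2) * ψ x)
              - 4 * δ * (∫ x : ℝ, ∫ y in Ioo (0:ℝ) L,
                  (Dx u τ x y) ^ 2 * iteratedDeriv 2 ψ x)
              + δ * (∫ x : ℝ, ∫ y in Ioo (0:ℝ) L, (u τ x y) ^ 2 * iteratedDeriv 4 ψ x)))
      = (∫ x : ℝ, ∫ y in Ioo (0:ℝ) L, (u 0 x y) ^ 2 * ψ x)
        + (∫ τ in (0:ℝ)..t,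
            (2 * (∫ x : ℝ, ∫ y in Ioo (0:ℝ) L, f₀ τ x y * u τ x y * ψ x)
              - 2 * (∫ x : ℝ, ∫ y in Ioo (0:ℝ) L,
                  (f₁ τ x y * (Dx u τ x y * ψ x + u τ x y * deriv ψ x)
                    + f₂ τ x y * Dy u τ x y * ψ x)))) := by
  intro t ht
  obtain ⟨R, hR0, hsupR⟩ := hsupp
  have hsup : ∀ τ x y : ℝ, R < |x| → u τ x y = 0 := fun τ x y hx => hsupR τ x y hx.le
  have cu : ContDiff ℝ (⊤ : ℕ∞) (T3 u) := hu
  have cut : ContDiff ℝ (⊤ : ℕ∞) (T3 (Dt u)) := contDiff_T3_Dt cu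
  have cux : ContDiff ℝ (⊤ : ℕ∞) (T3 (Dx u)) := contDiff_T3_Dx cu
  have cuy : ContDiff ℝ (⊤ : ℕ∞) (T3 (Dy u)) := contDiff_T3_Dy cu
  have cuxx : ContDiff ℝ (⊤ : ℕ∞) (T3 (Dx (Dx u))) := contDiff_T3_Dx cux
  have cuyy : ContDiff ℝ (⊤ : ℕ∞) (T3 (Dy (Dy u))) := contDiff_T3_Dy cuy
  have cuxxx : ContDiff ℝ (⊤ : ℕ∞) (T3 (Dx (Dx (Dx u)))) := contDiff_T3_Dx cuxx
  have cuxxxx : ContDiff ℝ (⊤ : ℕ∞) (T3 (Dx (Dx (Dx (Dx u))))) := contDiff_T3_Dx cuxxx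
  have cuyyy : ContDiff ℝ (⊤ : ℕ∞) (T3 (Dy (Dy (Dy u)))) := contDiff_T3_Dy cuyy
  have cuyyyy : ContDiff ℝ (⊤ : ℕ∞) (T3 (Dy (Dy (Dy (Dy u))))) := contDiff_T3_Dy cuyyy
  have cuxyy : ContDiff ℝ (⊤ : ℕ∞) (T3 (Dx (Dy (Dy u)))) := contDiff_T3_Dx cuyy
  have cuxy : ContDiff ℝ (⊤ : ℕ∞) (T3 (Dx (Dy u))) := contDiff_T3_Dx cuy
  have sut := supp_Dt hsup
  have sux := supp_Dx hsup
  have suy := supp_Dy hsup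
  have suxx := supp_Dx sux
  have suyy := supp_Dy suy
  have suxxx := supp_Dx suxx
  have suxxxx := supp_Dx suxxx
  have suyyy := supp_Dy suyy
  have suyyyy := supp_Dy suyyy
  have suxyy := supp_Dx suyy
  -- ψ facts
  have cψ : Continuous ψ := hψ.continuous
  have hψ1 : ContDiff ℝ 3 (deriv ψ) := by
    exact ((contDiff_succ_iff_deriv (n := 3)).mp (by exact_mod_cast hψ)).2.2
  have hψ2 : ContDiff ℝ 2 (deriv (deriv ψ)) := by
    exact ((contDiff_succ_iff_deriv (n := 2)).mp (by exact_mod_cast hψ1)).2.2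
  have hψ3 : ContDiff ℝ 1 (deriv (deriv (deriv ψ))) := by
    exact ((contDiff_succ_iff_deriv (n := 1)).mp (by exact_mod_cast hψ2)).2.2
  have hψ4 : ContDiff ℝ 0 (deriv (deriv (deriv (deriv ψ)))) := by
    exact ((contDiff_succ_iff_deriv (n := 0)).mp (by exact_mod_cast hψ3)).2.2
  have cψ1 : Continuous (deriv ψ) := hψ1.continuous
  have cψ2 : Continuous (deriv (deriv ψ)) := hψ2.continuous
  have cψ3 : Continuous (deriv (deriv (deriv ψ))) := hψ3.continuous
  have cψ4 : Continuous (deriv (deriv (deriv (deriv ψ)))) := hψ4.continuous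
  have dψ : ∀ x, HasDerivAt ψ (deriv ψ x) x := fun x =>
    ((hψ.differentiable (by norm_num)) x).hasDerivAt
  have dψ1 : ∀ x, HasDerivAt (deriv ψ) (deriv (deriv ψ) x) x := fun x =>
    ((hψ1.differentiable (by norm_num)) x).hasDerivAt
  have dψ2 : ∀ x, HasDerivAt (deriv (deriv ψ)) (deriv (deriv (deriv ψ)) x) x := fun x =>
    ((hψ2.differentiable (by norm_num)) x).hasDerivAt
  have dψ3 : ∀ x, HasDerivAt (deriv (deriv (deriv ψ))) (deriv (deriv (deriv (deriv ψ))) x) x :=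
    fun x => ((hψ3.differentiable (by norm_num)) x).hasDerivAt
  have i2 : iteratedDeriv 2 ψ = deriv (deriv ψ) := by
    rw [show (2:ℕ) = 1 + 1 from rfl, iteratedDeriv_succ, iteratedDeriv_one]
  have i3 : iteratedDeriv 3 ψ = deriv (deriv (deriv ψ)) := by
    rw [show (3:ℕ) = 2 + 1 from rfl, iteratedDeriv_succ, i2]
  have i4 : iteratedDeriv 4 ψ = deriv (deriv (deriv (deriv ψ))) := by
    rw [show (4:ℕ) = 3 + 1 from rfl, iteratedDeriv_succ, i3]
  -- the spatial identity
  have key : ∀ τ ∈ Icc (0:ℝ) T,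
      (∫ x : ℝ, ∫ y in Ioo (0:ℝ) L, 2 * u τ x y * Dt u τ x y * ψ x)
      = (2 * (∫ x : ℝ, ∫ y in Ioo (0:ℝ) L, f₀ τ x y * u τ x y * ψ x)
          - 2 * (∫ x : ℝ, ∫ y in Ioo (0:ℝ) L,
              (f₁ τ x y * (Dx u τ x y * ψ x + u τ x y * deriv ψ x)
                + f₂ τ x y * Dy u τ x y * ψ x)))
        - (-(b * ∫ x : ℝ, ∫ y in Ioo (0:ℝ) L, (u τ x y) ^ 2 * deriv ψ x)
            + (∫ x : ℝ, ∫ y in Ioo (0:ℝ) L,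
                (3 * (Dx u τ x y) ^ 2 + (Dy u τ x y) ^ 2) * deriv ψ x)
            - (∫ x : ℝ, ∫ y in Ioo (0:ℝ) L, (u τ x y) ^ 2 * iteratedDeriv 3 ψ x)
            + 2 * δ * (∫ x : ℝ, ∫ y in Ioo (0:ℝ) L,
                ((Dx (Dx u) τ x y) ^ 2 + (Dy (Dy u) τ x y) ^ 2) * ψ x)
            - 4 * δ * (∫ x : ℝ, ∫ y in Ioo (0:ℝ) L,
                (Dx u τ x y) ^ 2 * iteratedDeriv 2 ψ x)
            + δ * (∫ x : ℝ, ∫ y in Ioo (0:ℝ) L, (u τ x y) ^ 2 * iteratedDeriv 4 ψ x)) := by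
    intro τ hτ
    simp only [i2, i3, i4]
    have CS : ∀ {v : ℝ → ℝ → ℝ → ℝ}, Continuous (T3 v) →
        Continuous fun p : ℝ × ℝ => v τ p.1 p.2 := fun hv => cslice hv τ
    have HX : ∀ {v : ℝ → ℝ → ℝ → ℝ}, ContDiff ℝ (⊤ : ℕ∞) (T3 v) →
        ∀ x y : ℝ, HasDerivAt (fun s => v τ s y) (Dx v τ x y) x :=
      fun hv x y => hasDerivAt_Dx (hv.differentiable (by simp)) τ x y
    have HYD : ∀ {v : ℝ → ℝ → ℝ → ℝ}, ContDiff ℝ (⊤ : ℕ∞) (T3 v) →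
        ∀ x y : ℝ, HasDerivAt (fun s => v τ x s) (Dy v τ x y) y :=
      fun hv x y => hasDerivAt_Dy (hv.differentiable (by simp)) τ x y
    have sch : Dx (Dy u) = Dy (Dx u) := Dx_Dy_comm cu
    have bux0 : ∀ x : ℝ, Dx u τ x 0 = 0 := fun x => Dx_of_bc hbc0 τ x
    have buxL : ∀ x : ℝ, Dx u τ x L = 0 := fun x => Dx_of_bc hbcL τ x
    have E1 : (∫ x : ℝ, ∫ y in Ioo (0:ℝ) L, 2 * u τ x y * Dx u τ x y * ψ x) = -(∫ x : ℝ, ∫ y in Ioo (0:ℝ) L, u τ x y ^ 2 * deriv ψ x) :=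
      xibp_phi (R := R) hL (v := fun x y => u τ x y ^ 2) (v' := fun x y => 2 * u τ x y * Dx u τ x y)
        (φ := ψ) (φ' := deriv ψ) ((CS cu.continuous).pow 2) ((continuous_const.mul (CS cu.continuous)).mul (CS cux.continuous)) cψ cψ1
        (fun x y => by simpa using (HX cu x y).fun_pow 2)
        dψ
        (fun x y hx => by show u τ x y ^ 2 = 0; rw [hsup τ x y hx]; ring)
    have e2a : (∫ x : ℝ, ∫ y in Ioo (0:ℝ) L, Dx (Dx (Dx u)) τ x y * (2 * u τ x y * ψ x)) = -(∫ x : ℝ, ∫ y in Ioo (0:ℝ) L, Dx (Dx u) τ x y * (2 * Dx u τ x y * ψ x + 2 * u τ x y * deriv ψ x)) :=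
      xibp_mul (R := R) hL (v := fun x y => Dx (Dx u) τ x y) (v' := fun x y => Dx (Dx (Dx u)) τ x y)
        (w := fun x y => 2 * u τ x y) (w' := fun x y => 2 * Dx u τ x y) (φ := ψ) (φ' := deriv ψ)
        (CS cuxx.continuous) (CS cuxxx.continuous) (continuous_const.mul (CS cu.continuous)) (continuous_const.mul (CS cux.continuous)) cψ cψ1
        (fun x y => HX cuxx x y)
        (fun x y => (HX cu x y).const_mul 2)
        dψ
        (fun x y hx => suxx τ x y hx)
    have e2s : (∫ x : ℝ, ∫ y in Ioo (0:ℝ) L, Dx (Dx u) τ x y * (2 * Dx u τ x y * ψ x + 2 * u τ x y * deriv ψ x)) = (∫ x : ℝ, ∫ y in Ioo (0:ℝ) L, Dx (Dx u) τ x y * (2 * Dx u τ x y * ψ x)) + (∫ x : ℝ, ∫ y in Ioo (0:ℝ) L, Dx (Dx u) τ x y * (2 * u τ x y * deriv ψ x)) :=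
      iter_mul_add_split (R := R) hL (v := fun x y => Dx (Dx u) τ x y) (a := fun x y => 2 * Dx u τ x y * ψ x)
        (c := fun x y => 2 * u τ x y * deriv ψ x) (CS cuxx.continuous) ((continuous_const.mul (CS cux.continuous)).mul (cψ.comp continuous_fst)) ((continuous_const.mul (CS cu.continuous)).mul (cψ1.comp continuous_fst)) (fun x y hx => suxx τ x y hx)
    have e2b1 : (∫ x : ℝ, ∫ y in Ioo (0:ℝ) L, Dx (Dx u) τ x y * (2 * Dx u τ x y * ψ x)) = (∫ x : ℝ, ∫ y in Ioo (0:ℝ) L, 2 * Dx u τ x y * Dx (Dx u) τ x y * ψ x) :=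
      iter_congr (f := fun x y => Dx (Dx u) τ x y * (2 * Dx u τ x y * ψ x)) (g := fun x y => 2 * Dx u τ x y * Dx (Dx u) τ x y * ψ x) (fun x y => by ring)
    have e2b2 : (∫ x : ℝ, ∫ y in Ioo (0:ℝ) L, 2 * Dx u τ x y * Dx (Dx u) τ x y * ψ x) = -(∫ x : ℝ, ∫ y in Ioo (0:ℝ) L, Dx u τ x y ^ 2 * deriv ψ x) :=
      xibp_phi (R := R) hL (v := fun x y => Dx u τ x y ^ 2) (v' := fun x y => 2 * Dx u τ x y * Dx (Dx u) τ x y)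
        (φ := ψ) (φ' := deriv ψ) ((CS cux.continuous).pow 2) ((continuous_const.mul (CS cux.continuous)).mul (CS cuxx.continuous)) cψ cψ1
        (fun x y => by simpa using (HX cux x y).fun_pow 2)
        dψ
        (fun x y hx => by show Dx u τ x y ^ 2 = 0; rw [sux τ x y hx]; ring)
    have e2c : (∫ x : ℝ, ∫ y in Ioo (0:ℝ) L, Dx (Dx u) τ x y * (2 * u τ x y * deriv ψ x)) = -(∫ x : ℝ, ∫ y in Ioo (0:ℝ) L, Dx u τ x y * (2 * Dx u τ x y * deriv ψ x + 2 * u τ x y * deriv (deriv ψ) x)) :=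
      xibp_mul (R := R) hL (v := fun x y => Dx u τ x y) (v' := fun x y => Dx (Dx u) τ x y)
        (w := fun x y => 2 * u τ x y) (w' := fun x y => 2 * Dx u τ x y) (φ := deriv ψ) (φ' := deriv (deriv ψ))
        (CS cux.continuous) (CS cuxx.continuous) (continuous_const.mul (CS cu.continuous)) (continuous_const.mul (CS cux.continuous)) cψ1 cψ2
        (fun x y => HX cux x y)
        (fun x y => (HX cu x y).const_mul 2)
        dψ1
        (fun x y hx => sux τ x y hx)
    have e2cs : (∫ x : ℝ, ∫ y in Ioo (0:ℝ) L, Dx u τ x y * (2 * Dx u τ x y * deriv ψ x + 2 * u τ x y * deriv (deriv ψ) x)) = (∫ x : ℝ, ∫ y in Ioo (0:ℝ) L, Dx u τ x y * (2 * Dx u τ x y * deriv ψ x)) + (∫ x : ℝ, ∫ y in Ioo (0:ℝ) L, Dx u τ x y * (2 * u τ x y * deriv (deriv ψ) x)) :=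
      iter_mul_add_split (R := R) hL (v := fun x y => Dx u τ x y) (a := fun x y => 2 * Dx u τ x y * deriv ψ x)
        (c := fun x y => 2 * u τ x y * deriv (deriv ψ) x) (CS cux.continuous) ((continuous_const.mul (CS cux.continuous)).mul (cψ1.comp continuous_fst)) ((continuous_const.mul (CS cu.continuous)).mul (cψ2.comp continuous_fst)) (fun x y hx => sux τ x y hx)
    have e2d : (∫ x : ℝ, ∫ y in Ioo (0:ℝ) L, Dx u τ x y * (2 * Dx u τ x y * deriv ψ x)) = 2 * (∫ x : ℝ, ∫ y in Ioo (0:ℝ) L, Dx u τ x y ^ 2 * deriv ψ x) :=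
      iter_factor hL 2 (g := fun x y => Dx u τ x y * (2 * Dx u τ x y * deriv ψ x)) (f := fun x y => Dx u τ x y ^ 2 * deriv ψ x) (fun x y => by ring)
    have e2e1 : (∫ x : ℝ, ∫ y in Ioo (0:ℝ) L, Dx u τ x y * (2 * u τ x y * deriv (deriv ψ) x)) = (∫ x : ℝ, ∫ y in Ioo (0:ℝ) L, 2 * u τ x y * Dx u τ x y * deriv (deriv ψ) x) :=
      iter_congr (f := fun x y => Dx u τ x y * (2 * u τ x y * deriv (deriv ψ) x)) (g := fun x y => 2 * u τ x y * Dx u τ x y * deriv (deriv ψ) x) (fun x y => by ring)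
    have e2e2 : (∫ x : ℝ, ∫ y in Ioo (0:ℝ) L, 2 * u τ x y * Dx u τ x y * deriv (deriv ψ) x) = -(∫ x : ℝ, ∫ y in Ioo (0:ℝ) L, u τ x y ^ 2 * deriv (deriv (deriv ψ)) x) :=
      xibp_phi (R := R) hL (v := fun x y => u τ x y ^ 2) (v' := fun x y => 2 * u τ x y * Dx u τ x y)
        (φ := deriv (deriv ψ)) (φ' := deriv (deriv (deriv ψ))) ((CS cu.continuous).pow 2) ((continuous_const.mul (CS cu.continuous)).mul (CS cux.continuous)) cψ2 cψ3
        (fun x y => by simpa using (HX cu x y).fun_pow 2)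
        dψ2
        (fun x y hx => by show u τ x y ^ 2 = 0; rw [hsup τ x y hx]; ring)
    have Ht3pre : (∫ x : ℝ, ∫ y in Ioo (0:ℝ) L, Dx (Dx (Dx u)) τ x y * (2 * u τ x y * ψ x)) = 3 * (∫ x : ℝ, ∫ y in Ioo (0:ℝ) L, Dx u τ x y ^ 2 * deriv ψ x) - (∫ x : ℝ, ∫ y in Ioo (0:ℝ) L, u τ x y ^ 2 * deriv (deriv (deriv ψ)) x) := by
      rw [e2a, e2s, e2b1, e2b2, e2c, e2cs, e2d, e2e1, e2e2]; ring
    have e4a : (∫ x : ℝ, ∫ y in Ioo (0:ℝ) L, Dx (Dx (Dx (Dx u))) τ x y * (2 * u τ x y * ψ x)) = -(∫ x : ℝ, ∫ y in Ioo (0:ℝ) L, Dx (Dx (Dx u)) τ x y * (2 * Dx u τ x y * ψ x + 2 * u τ x y * deriv ψ x)) :=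
      xibp_mul (R := R) hL (v := fun x y => Dx (Dx (Dx u)) τ x y) (v' := fun x y => Dx (Dx (Dx (Dx u))) τ x y)
        (w := fun x y => 2 * u τ x y) (w' := fun x y => 2 * Dx u τ x y) (φ := ψ) (φ' := deriv ψ)
        (CS cuxxx.continuous) (CS cuxxxx.continuous) (continuous_const.mul (CS cu.continuous)) (continuous_const.mul (CS cux.continuous)) cψ cψ1
        (fun x y => HX cuxxx x y)
        (fun x y => (HX cu x y).const_mul 2)
        dψ
        (fun x y hx => suxxx τ x y hx)
    have e4as : (∫ x : ℝ, ∫ y in Ioo (0:ℝ) L, Dx (Dx (Dx u)) τ x y * (2 * Dx u τ x y * ψ x + 2 * u τ x y * deriv ψ x)) = (∫ x : ℝ, ∫ y in Ioo (0:ℝ) L, Dx (Dx (Dx u)) τ x y * (2 * Dx u τ x y * ψ x)) + (∫ x : ℝ, ∫ y in Ioo (0:ℝ) L, Dx (Dx (Dx u)) τ x y * (2 * u τ x y * deriv ψ x)) :=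
      iter_mul_add_split (R := R) hL (v := fun x y => Dx (Dx (Dx u)) τ x y) (a := fun x y => 2 * Dx u τ x y * ψ x)
        (c := fun x y => 2 * u τ x y * deriv ψ x) (CS cuxxx.continuous) ((continuous_const.mul (CS cux.continuous)).mul (cψ.comp continuous_fst)) ((continuous_const.mul (CS cu.continuous)).mul (cψ1.comp continuous_fst)) (fun x y hx => suxxx τ x y hx)
    have e4b : (∫ x : ℝ, ∫ y in Ioo (0:ℝ) L, Dx (Dx (Dx u)) τ x y * (2 * Dx u τ x y * ψ x)) = -(∫ x : ℝ, ∫ y in Ioo (0:ℝ) L, Dx (Dx u) τ x y * (2 * Dx (Dx u) τ x y * ψ x + 2 * Dx u τ x y * deriv ψ x)) :=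
      xibp_mul (R := R) hL (v := fun x y => Dx (Dx u) τ x y) (v' := fun x y => Dx (Dx (Dx u)) τ x y)
        (w := fun x y => 2 * Dx u τ x y) (w' := fun x y => 2 * Dx (Dx u) τ x y) (φ := ψ) (φ' := deriv ψ)
        (CS cuxx.continuous) (CS cuxxx.continuous) (continuous_const.mul (CS cux.continuous)) (continuous_const.mul (CS cuxx.continuous)) cψ cψ1
        (fun x y => HX cuxx x y)
        (fun x y => (HX cux x y).const_mul 2)
        dψ
        (fun x y hx => suxx τ x y hx)
    have e4bs : (∫ x : ℝ, ∫ y in Ioo (0:ℝ) L, Dx (Dx u) τ x y * (2 * Dx (Dx u) τ x y * ψ x + 2 * Dx u τ x y * deriv ψ x)) = (∫ x : ℝ, ∫ y in Ioo (0:ℝ) L, Dx (Dx u) τ x y * (2 * Dx (Dx u) τ x y * ψ x)) + (∫ x : ℝ, ∫ y in Ioo (0:ℝ) L, Dx (Dx u) τ x y * (2 * Dx u τ x y * deriv ψ x)) :=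
      iter_mul_add_split (R := R) hL (v := fun x y => Dx (Dx u) τ x y) (a := fun x y => 2 * Dx (Dx u) τ x y * ψ x)
        (c := fun x y => 2 * Dx u τ x y * deriv ψ x) (CS cuxx.continuous) ((continuous_const.mul (CS cuxx.continuous)).mul (cψ.comp continuous_fst)) ((continuous_const.mul (CS cux.continuous)).mul (cψ1.comp continuous_fst)) (fun x y hx => suxx τ x y hx)
    have e4c : (∫ x : ℝ, ∫ y in Ioo (0:ℝ) L, Dx (Dx u) τ x y * (2 * Dx (Dx u) τ x y * ψ x)) = 2 * (∫ x : ℝ, ∫ y in Ioo (0:ℝ) L, Dx (Dx u) τ x y ^ 2 * ψ x) :=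
      iter_factor hL 2 (g := fun x y => Dx (Dx u) τ x y * (2 * Dx (Dx u) τ x y * ψ x)) (f := fun x y => Dx (Dx u) τ x y ^ 2 * ψ x) (fun x y => by ring)
    have e4d1 : (∫ x : ℝ, ∫ y in Ioo (0:ℝ) L, Dx (Dx u) τ x y * (2 * Dx u τ x y * deriv ψ x)) = (∫ x : ℝ, ∫ y in Ioo (0:ℝ) L, 2 * Dx u τ x y * Dx (Dx u) τ x y * deriv ψ x) :=
      iter_congr (f := fun x y => Dx (Dx u) τ x y * (2 * Dx u τ x y * deriv ψ x)) (g := fun x y => 2 * Dx u τ x y * Dx (Dx u) τ x y * deriv ψ x) (fun x y => by ring)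
    have e4d2 : (∫ x : ℝ, ∫ y in Ioo (0:ℝ) L, 2 * Dx u τ x y * Dx (Dx u) τ x y * deriv ψ x) = -(∫ x : ℝ, ∫ y in Ioo (0:ℝ) L, Dx u τ x y ^ 2 * deriv (deriv ψ) x) :=
      xibp_phi (R := R) hL (v := fun x y => Dx u τ x y ^ 2) (v' := fun x y => 2 * Dx u τ x y * Dx (Dx u) τ x y)
        (φ := deriv ψ) (φ' := deriv (deriv ψ)) ((CS cux.continuous).pow 2) ((continuous_const.mul (CS cux.continuous)).mul (CS cuxx.continuous)) cψ1 cψ2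
        (fun x y => by simpa using (HX cux x y).fun_pow 2)
        dψ1
        (fun x y hx => by show Dx u τ x y ^ 2 = 0; rw [sux τ x y hx]; ring)
    have e4e : (∫ x : ℝ, ∫ y in Ioo (0:ℝ) L, Dx (Dx (Dx u)) τ x y * (2 * u τ x y * deriv ψ x)) = -(∫ x : ℝ, ∫ y in Ioo (0:ℝ) L, Dx (Dx u) τ x y * (2 * Dx u τ x y * deriv ψ x + 2 * u τ x y * deriv (deriv ψ) x)) :=
      xibp_mul (R := R) hL (v := fun x y => Dx (Dx u) τ x y) (v' := fun x y => Dx (Dx (Dx u)) τ x y)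
        (w := fun x y => 2 * u τ x y) (w' := fun x y => 2 * Dx u τ x y) (φ := deriv ψ) (φ' := deriv (deriv ψ))
        (CS cuxx.continuous) (CS cuxxx.continuous) (continuous_const.mul (CS cu.continuous)) (continuous_const.mul (CS cux.continuous)) cψ1 cψ2
        (fun x y => HX cuxx x y)
        (fun x y => (HX cu x y).const_mul 2)
        dψ1
        (fun x y hx => suxx τ x y hx)
    have e4es : (∫ x : ℝ, ∫ y in Ioo (0:ℝ) L, Dx (Dx u) τ x y * (2 * Dx u τ x y * deriv ψ x + 2 * u τ x y * deriv (deriv ψ) x)) = (∫ x : ℝ, ∫ y in Ioo (0:ℝ) L, Dx (Dx u) τ x y * (2 * Dx u τ x y * deriv ψ x)) + (∫ x : ℝ, ∫ y in Ioo (0:ℝ) L, Dx (Dx u) τ x y * (2 * u τ x y * deriv (deriv ψ) x)) :=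
      iter_mul_add_split (R := R) hL (v := fun x y => Dx (Dx u) τ x y) (a := fun x y => 2 * Dx u τ x y * deriv ψ x)
        (c := fun x y => 2 * u τ x y * deriv (deriv ψ) x) (CS cuxx.continuous) ((continuous_const.mul (CS cux.continuous)).mul (cψ1.comp continuous_fst)) ((continuous_const.mul (CS cu.continuous)).mul (cψ2.comp continuous_fst)) (fun x y hx => suxx τ x y hx)
    have e4f : (∫ x : ℝ, ∫ y in Ioo (0:ℝ) L, Dx (Dx u) τ x y * (2 * u τ x y * deriv (deriv ψ) x)) = -(∫ x : ℝ, ∫ y in Ioo (0:ℝ) L, Dx u τ x y * (2 * Dx u τ x y * deriv (deriv ψ) x + 2 * u τ x y * deriv (deriv (deriv ψ)) x)) :=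
      xibp_mul (R := R) hL (v := fun x y => Dx u τ x y) (v' := fun x y => Dx (Dx u) τ x y)
        (w := fun x y => 2 * u τ x y) (w' := fun x y => 2 * Dx u τ x y) (φ := deriv (deriv ψ)) (φ' := deriv (deriv (deriv ψ)))
        (CS cux.continuous) (CS cuxx.continuous) (continuous_const.mul (CS cu.continuous)) (continuous_const.mul (CS cux.continuous)) cψ2 cψ3
        (fun x y => HX cux x y)
        (fun x y => (HX cu x y).const_mul 2)
        dψ2
        (fun x y hx => sux τ x y hx)
    have e4fs : (∫ x : ℝ, ∫ y in Ioo (0:ℝ) L, Dx u τ x y * (2 * Dx u τ x y * deriv (deriv ψ) x + 2 * u τ x y * deriv (deriv (deriv ψ)) x)) = (∫ x : ℝ, ∫ y in Ioo (0:ℝ) L, Dx u τ x y * (2 * Dx u τ x y * deriv (deriv ψ) x)) + (∫ x : ℝ, ∫ y in Ioo (0:ℝ) L, Dx u τ x y * (2 * u τ x y * deriv (deriv (deriv ψ)) x)) :=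
      iter_mul_add_split (R := R) hL (v := fun x y => Dx u τ x y) (a := fun x y => 2 * Dx u τ x y * deriv (deriv ψ) x)
        (c := fun x y => 2 * u τ x y * deriv (deriv (deriv ψ)) x) (CS cux.continuous) ((continuous_const.mul (CS cux.continuous)).mul (cψ2.comp continuous_fst)) ((continuous_const.mul (CS cu.continuous)).mul (cψ3.comp continuous_fst)) (fun x y hx => sux τ x y hx)
    have e4g : (∫ x : ℝ, ∫ y in Ioo (0:ℝ) L, Dx u τ x y * (2 * Dx u τ x y * deriv (deriv ψ) x)) = 2 * (∫ x : ℝ, ∫ y in Ioo (0:ℝ) L, Dx u τ x y ^ 2 * deriv (deriv ψ) x) :=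
      iter_factor hL 2 (g := fun x y => Dx u τ x y * (2 * Dx u τ x y * deriv (deriv ψ) x)) (f := fun x y => Dx u τ x y ^ 2 * deriv (deriv ψ) x) (fun x y => by ring)
    have e4h1 : (∫ x : ℝ, ∫ y in Ioo (0:ℝ) L, Dx u τ x y * (2 * u τ x y * deriv (deriv (deriv ψ)) x)) = (∫ x : ℝ, ∫ y in Ioo (0:ℝ) L, 2 * u τ x y * Dx u τ x y * deriv (deriv (deriv ψ)) x) :=
      iter_congr (f := fun x y => Dx u τ x y * (2 * u τ x y * deriv (deriv (deriv ψ)) x)) (g := fun x y => 2 * u τ x y * Dx u τ x y * deriv (deriv (deriv ψ)) x) (fun x y => by ring)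
    have e4h2 : (∫ x : ℝ, ∫ y in Ioo (0:ℝ) L, 2 * u τ x y * Dx u τ x y * deriv (deriv (deriv ψ)) x) = -(∫ x : ℝ, ∫ y in Ioo (0:ℝ) L, u τ x y ^ 2 * deriv (deriv (deriv (deriv ψ))) x) :=
      xibp_phi (R := R) hL (v := fun x y => u τ x y ^ 2) (v' := fun x y => 2 * u τ x y * Dx u τ x y)
        (φ := deriv (deriv (deriv ψ))) (φ' := deriv (deriv (deriv (deriv ψ)))) ((CS cu.continuous).pow 2) ((continuous_const.mul (CS cu.continuous)).mul (CS cux.continuous)) cψ3 cψ4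
        (fun x y => by simpa using (HX cu x y).fun_pow 2)
        dψ3
        (fun x y hx => by show u τ x y ^ 2 = 0; rw [hsup τ x y hx]; ring)
    have Ht5pre : (∫ x : ℝ, ∫ y in Ioo (0:ℝ) L, Dx (Dx (Dx (Dx u))) τ x y * (2 * u τ x y * ψ x)) = 2 * (∫ x : ℝ, ∫ y in Ioo (0:ℝ) L, Dx (Dx u) τ x y ^ 2 * ψ x) - 4 * (∫ x : ℝ, ∫ y in Ioo (0:ℝ) L, Dx u τ x y ^ 2 * deriv (deriv ψ) x) + (∫ x : ℝ, ∫ y in Ioo (0:ℝ) L, u τ x y ^ 2 * deriv (deriv (deriv (deriv ψ))) x) := by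
      rw [e4a, e4as, e4b, e4bs, e4c, e4d1, e4d2, e4e, e4es, e4d1, e4d2, e4f, e4fs, e4g, e4h1, e4h2]; ring
    have e3a : (∫ x : ℝ, ∫ y in Ioo (0:ℝ) L, Dx (Dy (Dy u)) τ x y * (2 * u τ x y * ψ x)) = -(∫ x : ℝ, ∫ y in Ioo (0:ℝ) L, Dy (Dy u) τ x y * (2 * Dx u τ x y * ψ x + 2 * u τ x y * deriv ψ x)) :=
      xibp_mul (R := R) hL (v := fun x y => Dy (Dy u) τ x y) (v' := fun x y => Dx (Dy (Dy u)) τ x y)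
        (w := fun x y => 2 * u τ x y) (w' := fun x y => 2 * Dx u τ x y) (φ := ψ) (φ' := deriv ψ)
        (CS cuyy.continuous) (CS cuxyy.continuous) (continuous_const.mul (CS cu.continuous)) (continuous_const.mul (CS cux.continuous)) cψ cψ1
        (fun x y => HX cuyy x y)
        (fun x y => (HX cu x y).const_mul 2)
        dψ
        (fun x y hx => suyy τ x y hx)
    have e3s : (∫ x : ℝ, ∫ y in Ioo (0:ℝ) L, Dy (Dy u) τ x y * (2 * Dx u τ x y * ψ x + 2 * u τ x y * deriv ψ x)) = (∫ x : ℝ, ∫ y in Ioo (0:ℝ) L, Dy (Dy u) τ x y * (2 * Dx u τ x y * ψ x)) + (∫ x : ℝ, ∫ y in Ioo (0:ℝ) L, Dy (Dy u) τ x y * (2 * u τ x y * deriv ψ x)) :=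
      iter_mul_add_split (R := R) hL (v := fun x y => Dy (Dy u) τ x y) (a := fun x y => 2 * Dx u τ x y * ψ x)
        (c := fun x y => 2 * u τ x y * deriv ψ x) (CS cuyy.continuous) ((continuous_const.mul (CS cux.continuous)).mul (cψ.comp continuous_fst)) ((continuous_const.mul (CS cu.continuous)).mul (cψ1.comp continuous_fst)) (fun x y hx => suyy τ x y hx)
    have e3b : (∫ x : ℝ, ∫ y in Ioo (0:ℝ) L, Dy (Dy u) τ x y * (2 * Dx u τ x y * ψ x)) = -(∫ x : ℝ, ∫ y in Ioo (0:ℝ) L, Dy u τ x y * (2 * Dx (Dy u) τ x y * ψ x)) :=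
      yibp_mul hL (v := fun x y => Dy u τ x y) (v' := fun x y => Dy (Dy u) τ x y)
        (w := fun x y => 2 * Dx u τ x y) (w' := fun x y => 2 * Dx (Dy u) τ x y) (φ := ψ)
        (CS cuyy.continuous) (continuous_const.mul (CS cux.continuous)) (continuous_const.mul (CS cuxy.continuous)) cψ
        (fun x y => HYD cuy x y)
        (fun x y => by rw [sch]; exact (HYD cux x y).const_mul 2)
        (fun x => by show Dy u τ x L * (2 * Dx u τ x L * ψ x) - Dy u τ x 0 * (2 * Dx u τ x 0 * ψ x) = 0; rw [buxL x, bux0 x]; ring)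
    have e3c1 : (∫ x : ℝ, ∫ y in Ioo (0:ℝ) L, Dy u τ x y * (2 * Dx (Dy u) τ x y * ψ x)) = (∫ x : ℝ, ∫ y in Ioo (0:ℝ) L, 2 * Dy u τ x y * Dx (Dy u) τ x y * ψ x) :=
      iter_congr (f := fun x y => Dy u τ x y * (2 * Dx (Dy u) τ x y * ψ x)) (g := fun x y => 2 * Dy u τ x y * Dx (Dy u) τ x y * ψ x) (fun x y => by ring)
    have e3c2 : (∫ x : ℝ, ∫ y in Ioo (0:ℝ) L, 2 * Dy u τ x y * Dx (Dy u) τ x y * ψ x) = -(∫ x : ℝ, ∫ y in Ioo (0:ℝ) L, Dy u τ x y ^ 2 * deriv ψ x) :=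
      xibp_phi (R := R) hL (v := fun x y => Dy u τ x y ^ 2) (v' := fun x y => 2 * Dy u τ x y * Dx (Dy u) τ x y)
        (φ := ψ) (φ' := deriv ψ) ((CS cuy.continuous).pow 2) ((continuous_const.mul (CS cuy.continuous)).mul (CS cuxy.continuous)) cψ cψ1
        (fun x y => by simpa using (HX cuy x y).fun_pow 2)
        dψ
        (fun x y hx => by show Dy u τ x y ^ 2 = 0; rw [suy τ x y hx]; ring)
    have e3d : (∫ x : ℝ, ∫ y in Ioo (0:ℝ) L, Dy (Dy u) τ x y * (2 * u τ x y * deriv ψ x)) = -(∫ x : ℝ, ∫ y in Ioo (0:ℝ) L, Dy u τ x y * (2 * Dy u τ x y * deriv ψ x)) :=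
      yibp_mul hL (v := fun x y => Dy u τ x y) (v' := fun x y => Dy (Dy u) τ x y)
        (w := fun x y => 2 * u τ x y) (w' := fun x y => 2 * Dy u τ x y) (φ := deriv ψ)
        (CS cuyy.continuous) (continuous_const.mul (CS cu.continuous)) (continuous_const.mul (CS cuy.continuous)) cψ1
        (fun x y => HYD cuy x y)
        (fun x y => (HYD cu x y).const_mul 2)
        (fun x => by show Dy u τ x L * (2 * u τ x L * deriv ψ x) - Dy u τ x 0 * (2 * u τ x 0 * deriv ψ x) = 0; rw [hbcL τ x, hbc0 τ x]; ring)
    have e3d2 : (∫ x : ℝ, ∫ y in Ioo (0:ℝ) L, Dy u τ x y * (2 * Dy u τ x y * deriv ψ x)) = 2 * (∫ x : ℝ, ∫ y in Ioo (0:ℝ) L, Dy u τ x y ^ 2 * deriv ψ x) :=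
      iter_factor hL 2 (g := fun x y => Dy u τ x y * (2 * Dy u τ x y * deriv ψ x)) (f := fun x y => Dy u τ x y ^ 2 * deriv ψ x) (fun x y => by ring)
    have Ht4pre : (∫ x : ℝ, ∫ y in Ioo (0:ℝ) L, Dx (Dy (Dy u)) τ x y * (2 * u τ x y * ψ x)) = (∫ x : ℝ, ∫ y in Ioo (0:ℝ) L, Dy u τ x y ^ 2 * deriv ψ x) := by
      rw [e3a, e3s, e3b, e3c1, e3c2, e3d, e3d2]; ring
    have e5a : (∫ x : ℝ, ∫ y in Ioo (0:ℝ) L, Dy (Dy (Dy (Dy u))) τ x y * (2 * u τ x y * ψ x)) = -(∫ x : ℝ, ∫ y in Ioo (0:ℝ) L, Dy (Dy (Dy u)) τ x y * (2 * Dy u τ x y * ψ x)) :=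
      yibp_mul hL (v := fun x y => Dy (Dy (Dy u)) τ x y) (v' := fun x y => Dy (Dy (Dy (Dy u))) τ x y)
        (w := fun x y => 2 * u τ x y) (w' := fun x y => 2 * Dy u τ x y) (φ := ψ)
        (CS cuyyyy.continuous) (continuous_const.mul (CS cu.continuous)) (continuous_const.mul (CS cuy.continuous)) cψ
        (fun x y => HYD cuyyy x y)
        (fun x y => (HYD cu x y).const_mul 2)
        (fun x => by show Dy (Dy (Dy u)) τ x L * (2 * u τ x L * ψ x) - Dy (Dy (Dy u)) τ x 0 * (2 * u τ x 0 * ψ x) = 0; rw [hbcL τ x, hbc0 τ x]; ring)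
    have e5b : (∫ x : ℝ, ∫ y in Ioo (0:ℝ) L, Dy (Dy (Dy u)) τ x y * (2 * Dy u τ x y * ψ x)) = -(∫ x : ℝ, ∫ y in Ioo (0:ℝ) L, Dy (Dy u) τ x y * (2 * Dy (Dy u) τ x y * ψ x)) :=
      yibp_mul hL (v := fun x y => Dy (Dy u) τ x y) (v' := fun x y => Dy (Dy (Dy u)) τ x y)
        (w := fun x y => 2 * Dy u τ x y) (w' := fun x y => 2 * Dy (Dy u) τ x y) (φ := ψ)
        (CS cuyyy.continuous) (continuous_const.mul (CS cuy.continuous)) (continuous_const.mul (CS cuyy.continuous)) cψ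
        (fun x y => HYD cuyy x y)
        (fun x y => (HYD cuy x y).const_mul 2)
        (fun x => by show Dy (Dy u) τ x L * (2 * Dy u τ x L * ψ x) - Dy (Dy u) τ x 0 * (2 * Dy u τ x 0 * ψ x) = 0; rw [hbcyyL τ x, hbcyy0 τ x]; ring)
    have e5c : (∫ x : ℝ, ∫ y in Ioo (0:ℝ) L, Dy (Dy u) τ x y * (2 * Dy (Dy u) τ x y * ψ x)) = 2 * (∫ x : ℝ, ∫ y in Ioo (0:ℝ) L, Dy (Dy u) τ x y ^ 2 * ψ x) :=
      iter_factor hL 2 (g := fun x y => Dy (Dy u) τ x y * (2 * Dy (Dy u) τ x y * ψ x)) (f := fun x y => Dy (Dy u) τ x y ^ 2 * ψ x) (fun x y => by ring)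
    have Ht6pre : (∫ x : ℝ, ∫ y in Ioo (0:ℝ) L, Dy (Dy (Dy (Dy u))) τ x y * (2 * u τ x y * ψ x)) = 2 * (∫ x : ℝ, ∫ y in Ioo (0:ℝ) L, Dy (Dy u) τ x y ^ 2 * ψ x) := by
      rw [e5a, e5b, e5c]; ring
    have e6a : (∫ x : ℝ, ∫ y in Ioo (0:ℝ) L, Dx f₁ τ x y * (2 * u τ x y * ψ x)) = -(∫ x : ℝ, ∫ y in Ioo (0:ℝ) L, f₁ τ x y * (2 * Dx u τ x y * ψ x + 2 * u τ x y * deriv ψ x)) :=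
      xibp_flip (R := R) hL (A := fun x y => f₁ τ x y) (A' := fun x y => Dx f₁ τ x y)
        (B := fun x y => 2 * u τ x y * ψ x) (B' := fun x y => 2 * Dx u τ x y * ψ x + 2 * u τ x y * deriv ψ x)
        (CS hf₁.continuous) (CS (continuous_T3_Dx_of_contDiffOne hf₁))
        ((continuous_const.mul (CS cu.continuous)).mul (cψ.comp continuous_fst)) ((((continuous_const.mul (CS cux.continuous))).mul (cψ.comp continuous_fst)).add (((continuous_const.mul (CS cu.continuous))).mul (cψ1.comp continuous_fst)))
        (fun x y => hasDerivAt_Dx (hf₁.differentiable one_ne_zero) τ x y)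
        (fun x y => ((HX cu x y).const_mul 2).mul (dψ x))
        (fun x y hx => by show 2 * u τ x y * ψ x = 0; rw [hsup τ x y hx]; ring)
    have e6b : (∫ x : ℝ, ∫ y in Ioo (0:ℝ) L, f₁ τ x y * (2 * Dx u τ x y * ψ x + 2 * u τ x y * deriv ψ x)) = 2 * (∫ x : ℝ, ∫ y in Ioo (0:ℝ) L, f₁ τ x y * (Dx u τ x y * ψ x + u τ x y * deriv ψ x)) :=
      iter_factor hL 2 (g := fun x y => f₁ τ x y * (2 * Dx u τ x y * ψ x + 2 * u τ x y * deriv ψ x)) (f := fun x y => f₁ τ x y * (Dx u τ x y * ψ x + u τ x y * deriv ψ x)) (fun x y => by ring)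
    have e7a : (∫ x : ℝ, ∫ y in Ioo (0:ℝ) L, Dy f₂ τ x y * (2 * u τ x y * ψ x)) = -(∫ x : ℝ, ∫ y in Ioo (0:ℝ) L, f₂ τ x y * (2 * Dy u τ x y * ψ x)) :=
      yibp_mul hL (v := fun x y => f₂ τ x y) (v' := fun x y => Dy f₂ τ x y)
        (w := fun x y => 2 * u τ x y) (w' := fun x y => 2 * Dy u τ x y) (φ := ψ)
        (CS (continuous_T3_Dy_of_contDiffOne hf₂)) (continuous_const.mul (CS cu.continuous)) (continuous_const.mul (CS cuy.continuous)) cψ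
        (fun x y => hasDerivAt_Dy (hf₂.differentiable one_ne_zero) τ x y)
        (fun x y => (HYD cu x y).const_mul 2)
        (fun x => by show f₂ τ x L * (2 * u τ x L * ψ x) - f₂ τ x 0 * (2 * u τ x 0 * ψ x) = 0; rw [hbcL τ x, hbc0 τ x]; ring)
    have e7b : (∫ x : ℝ, ∫ y in Ioo (0:ℝ) L, f₂ τ x y * (2 * Dy u τ x y * ψ x)) = 2 * (∫ x : ℝ, ∫ y in Ioo (0:ℝ) L, f₂ τ x y * Dy u τ x y * ψ x) :=
      iter_factor hL 2 (g := fun x y => f₂ τ x y * (2 * Dy u τ x y * ψ x)) (f := fun x y => f₂ τ x y * Dy u τ x y * ψ x) (fun x y => by ring)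
    have h0fac : (∫ x : ℝ, ∫ y in Ioo (0:ℝ) L, 2 * (f₀ τ x y * u τ x y * ψ x)) = 2 * (∫ x : ℝ, ∫ y in Ioo (0:ℝ) L, f₀ τ x y * u τ x y * ψ x) :=
      iter_smul 2 (fun x y => f₀ τ x y * u τ x y * ψ x)
    have hbfac : (∫ x : ℝ, ∫ y in Ioo (0:ℝ) L, b * (2 * u τ x y * Dx u τ x y * ψ x)) = b * (∫ x : ℝ, ∫ y in Ioo (0:ℝ) L, 2 * u τ x y * Dx u τ x y * ψ x) :=
      iter_smul b (fun x y => 2 * u τ x y * Dx u τ x y * ψ x)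
    have h5fac : (∫ x : ℝ, ∫ y in Ioo (0:ℝ) L, δ * (Dx (Dx (Dx (Dx u))) τ x y * (2 * u τ x y * ψ x))) = δ * (∫ x : ℝ, ∫ y in Ioo (0:ℝ) L, Dx (Dx (Dx (Dx u))) τ x y * (2 * u τ x y * ψ x)) :=
      iter_smul δ (fun x y => Dx (Dx (Dx (Dx u))) τ x y * (2 * u τ x y * ψ x))
    have h6fac : (∫ x : ℝ, ∫ y in Ioo (0:ℝ) L, δ * (Dy (Dy (Dy (Dy u))) τ x y * (2 * u τ x y * ψ x))) = δ * (∫ x : ℝ, ∫ y in Ioo (0:ℝ) L, Dy (Dy (Dy (Dy u))) τ x y * (2 * u τ x y * ψ x)) :=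
      iter_smul δ (fun x y => Dy (Dy (Dy (Dy u))) τ x y * (2 * u τ x y * ψ x))
    have Hpt : (∫ x : ℝ, ∫ y in Ioo (0:ℝ) L, 2 * u τ x y * Dt u τ x y * ψ x) = (∫ x : ℝ, ∫ y in Ioo (0:ℝ) L, 2 * (f₀ τ x y * u τ x y * ψ x) + Dx f₁ τ x y * (2 * u τ x y * ψ x) + Dy f₂ τ x y * (2 * u τ x y * ψ x) - b * (2 * u τ x y * Dx u τ x y * ψ x) - Dx (Dx (Dx u)) τ x y * (2 * u τ x y * ψ x) - Dx (Dy (Dy u)) τ x y * (2 * u τ x y * ψ x) - δ * (Dx (Dx (Dx (Dx u))) τ x y * (2 * u τ x y * ψ x)) - δ * (Dy (Dy (Dy (Dy u))) τ x y * (2 * u τ x y * ψ x))) :=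
      iter_congr_on (fun x y hy => by
        have h := heq τ hτ x y ⟨hy.1.le, hy.2.le⟩
        linear_combination (2 * u τ x y * ψ x) * h)
    have Hsplit : (∫ x : ℝ, ∫ y in Ioo (0:ℝ) L, 2 * (f₀ τ x y * u τ x y * ψ x) + Dx f₁ τ x y * (2 * u τ x y * ψ x) + Dy f₂ τ x y * (2 * u τ x y * ψ x) - b * (2 * u τ x y * Dx u τ x y * ψ x) - Dx (Dx (Dx u)) τ x y * (2 * u τ x y * ψ x) - Dx (Dy (Dy u)) τ x y * (2 * u τ x y * ψ x) - δ * (Dx (Dx (Dx (Dx u))) τ x y * (2 * u τ x y * ψ x)) - δ * (Dy (Dy (Dy (Dy u))) τ x y * (2 * u τ x y * ψ x)))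
        = (∫ x : ℝ, ∫ y in Ioo (0:ℝ) L, 2 * (f₀ τ x y * u τ x y * ψ x)) + (∫ x : ℝ, ∫ y in Ioo (0:ℝ) L, Dx f₁ τ x y * (2 * u τ x y * ψ x)) + (∫ x : ℝ, ∫ y in Ioo (0:ℝ) L, Dy f₂ τ x y * (2 * u τ x y * ψ x)) - (∫ x : ℝ, ∫ y in Ioo (0:ℝ) L, b * (2 * u τ x y * Dx u τ x y * ψ x)) - (∫ x : ℝ, ∫ y in Ioo (0:ℝ) L, Dx (Dx (Dx u)) τ x y * (2 * u τ x y * ψ x)) - (∫ x : ℝ, ∫ y in Ioo (0:ℝ) L, Dx (Dy (Dy u)) τ x y * (2 * u τ x y * ψ x)) - (∫ x : ℝ, ∫ y in Ioo (0:ℝ) L, δ * (Dx (Dx (Dx (Dx u))) τ x y * (2 * u τ x y * ψ x))) - (∫ x : ℝ, ∫ y in Ioo (0:ℝ) L, δ * (Dy (Dy (Dy (Dy u))) τ x y * (2 * u τ x y * ψ x))) :=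
      iter_split8 (R := R) hL
        (f0 := fun x y => 2 * (f₀ τ x y * u τ x y * ψ x)) (f1 := fun x y => Dx f₁ τ x y * (2 * u τ x y * ψ x)) (f2 := fun x y => Dy f₂ τ x y * (2 * u τ x y * ψ x))
        (fb := fun x y => b * (2 * u τ x y * Dx u τ x y * ψ x)) (f3 := fun x y => Dx (Dx (Dx u)) τ x y * (2 * u τ x y * ψ x)) (f4 := fun x y => Dx (Dy (Dy u)) τ x y * (2 * u τ x y * ψ x))
        (f5 := fun x y => δ * (Dx (Dx (Dx (Dx u))) τ x y * (2 * u τ x y * ψ x))) (f6 := fun x y => δ * (Dy (Dy (Dy (Dy u))) τ x y * (2 * u τ x y * ψ x)))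
        (continuous_const.mul (((CS hf₀.continuous).mul (CS cu.continuous)).mul (cψ.comp continuous_fst)))
        (fun x y hx => by show 2 * (f₀ τ x y * u τ x y * ψ x) = 0; rw [hsup τ x y hx]; ring)
        ((CS (continuous_T3_Dx_of_contDiffOne hf₁)).mul (((continuous_const.mul (CS cu.continuous))).mul (cψ.comp continuous_fst)))
        (fun x y hx => by show Dx f₁ τ x y * (2 * u τ x y * ψ x) = 0; rw [hsup τ x y hx]; ring)
        ((CS (continuous_T3_Dy_of_contDiffOne hf₂)).mul (((continuous_const.mul (CS cu.continuous))).mul (cψ.comp continuous_fst)))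
        (fun x y hx => by show Dy f₂ τ x y * (2 * u τ x y * ψ x) = 0; rw [hsup τ x y hx]; ring)
        (continuous_const.mul ((((continuous_const.mul (CS cu.continuous))).mul (CS cux.continuous)).mul (cψ.comp continuous_fst)))
        (fun x y hx => by show b * (2 * u τ x y * Dx u τ x y * ψ x) = 0; rw [hsup τ x y hx]; ring)
        ((CS cuxxx.continuous).mul (((continuous_const.mul (CS cu.continuous))).mul (cψ.comp continuous_fst)))
        (fun x y hx => by show Dx (Dx (Dx u)) τ x y * (2 * u τ x y * ψ x) = 0; rw [hsup τ x y hx]; ring)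
        ((CS cuxyy.continuous).mul (((continuous_const.mul (CS cu.continuous))).mul (cψ.comp continuous_fst)))
        (fun x y hx => by show Dx (Dy (Dy u)) τ x y * (2 * u τ x y * ψ x) = 0; rw [hsup τ x y hx]; ring)
        (continuous_const.mul ((CS cuxxxx.continuous).mul (((continuous_const.mul (CS cu.continuous))).mul (cψ.comp continuous_fst))))
        (fun x y hx => by show δ * (Dx (Dx (Dx (Dx u))) τ x y * (2 * u τ x y * ψ x)) = 0; rw [hsup τ x y hx]; ring)
        (continuous_const.mul ((CS cuyyyy.continuous).mul (((continuous_const.mul (CS cu.continuous))).mul (cψ.comp continuous_fst))))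
        (fun x y hx => by show δ * (Dy (Dy (Dy (Dy u))) τ x y * (2 * u τ x y * ψ x)) = 0; rw [hsup τ x y hx]; ring)
    have hK2 : (∫ x : ℝ, ∫ y in Ioo (0:ℝ) L, f₁ τ x y * (Dx u τ x y * ψ x + u τ x y * deriv ψ x) + f₂ τ x y * Dy u τ x y * ψ x) = (∫ x : ℝ, ∫ y in Ioo (0:ℝ) L, f₁ τ x y * (Dx u τ x y * ψ x + u τ x y * deriv ψ x)) + (∫ x : ℝ, ∫ y in Ioo (0:ℝ) L, f₂ τ x y * Dy u τ x y * ψ x) :=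
      iter_add (R := R) hL
        ((CS hf₁.continuous).mul (((CS cux.continuous).mul (cψ.comp continuous_fst)).add ((CS cu.continuous).mul (cψ1.comp continuous_fst))))
        (fun x y hx => by
          show f₁ τ x y * (Dx u τ x y * ψ x + u τ x y * deriv ψ x) = 0
          rw [hsup τ x y hx, sux τ x y hx]; ring)
        (((CS hf₂.continuous).mul (CS cuy.continuous)).mul (cψ.comp continuous_fst))
        (fun x y hx => by show f₂ τ x y * Dy u τ x y * ψ x = 0; rw [suy τ x y hx]; ring)
    have hJ2a : (∫ x : ℝ, ∫ y in Ioo (0:ℝ) L, (3 * Dx u τ x y ^ 2 + Dy u τ x y ^ 2) * deriv ψ x)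
        = (∫ x : ℝ, ∫ y in Ioo (0:ℝ) L, 3 * (Dx u τ x y ^ 2 * deriv ψ x) + Dy u τ x y ^ 2 * deriv ψ x) :=
      iter_congr (f := fun x y => (3 * Dx u τ x y ^ 2 + Dy u τ x y ^ 2) * deriv ψ x)
        (g := fun x y => 3 * (Dx u τ x y ^ 2 * deriv ψ x) + Dy u τ x y ^ 2 * deriv ψ x) (fun x y => by ring)
    have hJ2b : (∫ x : ℝ, ∫ y in Ioo (0:ℝ) L, 3 * (Dx u τ x y ^ 2 * deriv ψ x) + Dy u τ x y ^ 2 * deriv ψ x)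
        = (∫ x : ℝ, ∫ y in Ioo (0:ℝ) L, 3 * (Dx u τ x y ^ 2 * deriv ψ x)) + (∫ x : ℝ, ∫ y in Ioo (0:ℝ) L, Dy u τ x y ^ 2 * deriv ψ x) :=
      iter_add (R := R) hL
        (continuous_const.mul (((CS cux.continuous).pow 2).mul (cψ1.comp continuous_fst)))
        (fun x y hx => by show 3 * (Dx u τ x y ^ 2 * deriv ψ x) = 0; rw [sux τ x y hx]; ring)
        (((CS cuy.continuous).pow 2).mul (cψ1.comp continuous_fst))
        (fun x y hx => by show Dy u τ x y ^ 2 * deriv ψ x = 0; rw [suy τ x y hx]; ring)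
    have hJ2c : (∫ x : ℝ, ∫ y in Ioo (0:ℝ) L, 3 * (Dx u τ x y ^ 2 * deriv ψ x)) = 3 * (∫ x : ℝ, ∫ y in Ioo (0:ℝ) L, Dx u τ x y ^ 2 * deriv ψ x) :=
      iter_smul 3 (fun x y => Dx u τ x y ^ 2 * deriv ψ x)
    have hJ4s : (∫ x : ℝ, ∫ y in Ioo (0:ℝ) L, (Dx (Dx u) τ x y ^ 2 + Dy (Dy u) τ x y ^ 2) * ψ x) = (∫ x : ℝ, ∫ y in Ioo (0:ℝ) L, Dx (Dx u) τ x y ^ 2 * ψ x + Dy (Dy u) τ x y ^ 2 * ψ x) :=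
      iter_congr (f := fun x y => (Dx (Dx u) τ x y ^ 2 + Dy (Dy u) τ x y ^ 2) * ψ x)
        (g := fun x y => Dx (Dx u) τ x y ^ 2 * ψ x + Dy (Dy u) τ x y ^ 2 * ψ x) (fun x y => by ring)
    have hJ4t : (∫ x : ℝ, ∫ y in Ioo (0:ℝ) L, Dx (Dx u) τ x y ^ 2 * ψ x + Dy (Dy u) τ x y ^ 2 * ψ x) = (∫ x : ℝ, ∫ y in Ioo (0:ℝ) L, Dx (Dx u) τ x y ^ 2 * ψ x) + (∫ x : ℝ, ∫ y in Ioo (0:ℝ) L, Dy (Dy u) τ x y ^ 2 * ψ x) :=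
      iter_add (R := R) hL
        (((CS cuxx.continuous).pow 2).mul (cψ.comp continuous_fst))
        (fun x y hx => by show Dx (Dx u) τ x y ^ 2 * ψ x = 0; rw [suxx τ x y hx]; ring)
        (((CS cuyy.continuous).pow 2).mul (cψ.comp continuous_fst))
        (fun x y hx => by show Dy (Dy u) τ x y ^ 2 * ψ x = 0; rw [suyy τ x y hx]; ring)
    rw [Hpt, Hsplit, h0fac, e6a, e6b, e7a, e7b, hbfac, E1, Ht3pre, Ht4pre, h5fac, Ht5pre,
      h6fac, Ht6pre, hK2, hJ2a, hJ2b, hJ2c, hJ4s, hJ4t]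
    ring

  -- time derivative of the energy
  have hFderiv : ∀ τ : ℝ, HasDerivAt (fun σ => ∫ x : ℝ, ∫ y in Ioo (0:ℝ) L, (u σ x y) ^ 2 * ψ x)
      (∫ x : ℝ, ∫ y in Ioo (0:ℝ) L, 2 * u τ x y * Dt u τ x y * ψ x) τ := by
    intro τ
    exact hasDerivAt_param (R := R) hL
      (g := fun σ x y => u σ x y ^ 2 * ψ x)
      (g' := fun σ x y => 2 * u σ x y * Dt u σ x y * ψ x)
      (by exact (cu.continuous.pow 2).mul (cψ.comp (continuous_fst.comp continuous_snd)))
      (by exact (((continuous_const.mul cu.continuous).mul cut.continuous).mul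
        (cψ.comp (continuous_fst.comp continuous_snd))))
      (fun σ x y hx => by
        show u σ x y ^ 2 * ψ x = 0
        rw [hsup σ x y hx]; ring)
      (fun σ x y hx => by
        show 2 * u σ x y * Dt u σ x y * ψ x = 0
        rw [hsup σ x y hx, sut σ x y hx]; ring)
      (fun σ x y => by
        simpa using ((hasDerivAt_Dt (cu.differentiable (by simp)) σ x y).fun_pow 2).mul_const (ψ x))
      τ
  -- continuity in τ of all the integral atoms
  have cI2 : Continuous (iteratedDeriv 2 ψ) := by rw [i2]; exact cψ2
  have cI3 : Continuous (iteratedDeriv 3 ψ) := by rw [i3]; exact cψ3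
  have cI4 : Continuous (iteratedDeriv 4 ψ) := by rw [i4]; exact cψ4
  have pψ : Continuous fun p : ℝ × ℝ × ℝ => ψ p.2.1 := cψ.comp (continuous_fst.comp continuous_snd)
  have pψ1 : Continuous fun p : ℝ × ℝ × ℝ => deriv ψ p.2.1 :=
    cψ1.comp (continuous_fst.comp continuous_snd)
  have pI2 : Continuous fun p : ℝ × ℝ × ℝ => iteratedDeriv 2 ψ p.2.1 :=
    cI2.comp (continuous_fst.comp continuous_snd)
  have pI3 : Continuous fun p : ℝ × ℝ × ℝ => iteratedDeriv 3 ψ p.2.1 :=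
    cI3.comp (continuous_fst.comp continuous_snd)
  have pI4 : Continuous fun p : ℝ × ℝ × ℝ => iteratedDeriv 4 ψ p.2.1 :=
    cI4.comp (continuous_fst.comp continuous_snd)
  have contJ1 : Continuous fun τ => ∫ x : ℝ, ∫ y in Ioo (0:ℝ) L, (u τ x y) ^ 2 * deriv ψ x :=
    cont_param (R := R) hL ((cu.continuous.pow 2).mul pψ1)
      (fun τ x y hx => by rw [hsup τ x y hx]; ring)
  have contJ2 : Continuous fun τ => ∫ x : ℝ, ∫ y in Ioo (0:ℝ) L,
      (3 * (Dx u τ x y) ^ 2 + (Dy u τ x y) ^ 2) * deriv ψ x :=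
    cont_param (R := R) hL
      (((continuous_const.mul (cux.continuous.pow 2)).add (cuy.continuous.pow 2)).mul pψ1)
      (fun τ x y hx => by rw [sux τ x y hx, suy τ x y hx]; ring)
  have contJ3 : Continuous fun τ => ∫ x : ℝ, ∫ y in Ioo (0:ℝ) L,
      (u τ x y) ^ 2 * iteratedDeriv 3 ψ x :=
    cont_param (R := R) hL ((cu.continuous.pow 2).mul pI3)
      (fun τ x y hx => by rw [hsup τ x y hx]; ring)
  have contJ4 : Continuous fun τ => ∫ x : ℝ, ∫ y in Ioo (0:ℝ) L,
      ((Dx (Dx u) τ x y) ^ 2 + (Dy (Dy u) τ x y) ^ 2) * ψ x :=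
    cont_param (R := R) hL
      (((cuxx.continuous.pow 2).add (cuyy.continuous.pow 2)).mul pψ)
      (fun τ x y hx => by rw [suxx τ x y hx, suyy τ x y hx]; ring)
  have contJ5 : Continuous fun τ => ∫ x : ℝ, ∫ y in Ioo (0:ℝ) L,
      (Dx u τ x y) ^ 2 * iteratedDeriv 2 ψ x :=
    cont_param (R := R) hL ((cux.continuous.pow 2).mul pI2)
      (fun τ x y hx => by rw [sux τ x y hx]; ring)
  have contJ6 : Continuous fun τ => ∫ x : ℝ, ∫ y in Ioo (0:ℝ) L,
      (u τ x y) ^ 2 * iteratedDeriv 4 ψ x :=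
    cont_param (R := R) hL ((cu.continuous.pow 2).mul pI4)
      (fun τ x y hx => by rw [hsup τ x y hx]; ring)
  have contK1 : Continuous fun τ => ∫ x : ℝ, ∫ y in Ioo (0:ℝ) L, f₀ τ x y * u τ x y * ψ x :=
    cont_param (R := R) hL ((hf₀.continuous.mul cu.continuous).mul pψ)
      (fun τ x y hx => by rw [hsup τ x y hx]; ring)
  have contK2 : Continuous fun τ => ∫ x : ℝ, ∫ y in Ioo (0:ℝ) L,
      (f₁ τ x y * (Dx u τ x y * ψ x + u τ x y * deriv ψ x)
        + f₂ τ x y * Dy u τ x y * ψ x) :=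
    cont_param (R := R) hL
      ((hf₁.continuous.mul ((cux.continuous.mul pψ).add (cu.continuous.mul pψ1))).add
        ((hf₂.continuous.mul cuy.continuous).mul pψ))
      (fun τ x y hx => by rw [hsup τ x y hx, sux τ x y hx, suy τ x y hx]; ring)
  have hAc : Continuous fun τ =>
      -(b * ∫ x : ℝ, ∫ y in Ioo (0:ℝ) L, (u τ x y) ^ 2 * deriv ψ x)
        + (∫ x : ℝ, ∫ y in Ioo (0:ℝ) L,
            (3 * (Dx u τ x y) ^ 2 + (Dy u τ x y) ^ 2) * deriv ψ x)
        - (∫ x : ℝ, ∫ y in Ioo (0:ℝ) L, (u τ x y) ^ 2 * iteratedDeriv 3 ψ x)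
        + 2 * δ * (∫ x : ℝ, ∫ y in Ioo (0:ℝ) L,
            ((Dx (Dx u) τ x y) ^ 2 + (Dy (Dy u) τ x y) ^ 2) * ψ x)
        - 4 * δ * (∫ x : ℝ, ∫ y in Ioo (0:ℝ) L,
            (Dx u τ x y) ^ 2 * iteratedDeriv 2 ψ x)
        + δ * (∫ x : ℝ, ∫ y in Ioo (0:ℝ) L, (u τ x y) ^ 2 * iteratedDeriv 4 ψ x) :=
    (((((continuous_const.mul contJ1).neg.add contJ2).sub contJ3).add
      (continuous_const.mul contJ4)).sub (continuous_const.mul contJ5)).add (continuous_const.mul contJ6)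
  have hBc : Continuous fun τ =>
      2 * (∫ x : ℝ, ∫ y in Ioo (0:ℝ) L, f₀ τ x y * u τ x y * ψ x)
        - 2 * (∫ x : ℝ, ∫ y in Ioo (0:ℝ) L,
            (f₁ τ x y * (Dx u τ x y * ψ x + u τ x y * deriv ψ x)
              + f₂ τ x y * Dy u τ x y * ψ x)) :=
    (continuous_const.mul contK1).sub (continuous_const.mul contK2)
  -- fundamental theorem of calculus
  have h0t : (0:ℝ) ≤ t := ht.1
  have hd : ∀ τ ∈ uIcc (0:ℝ) t,
      HasDerivAt (fun σ => ∫ x : ℝ, ∫ y in Ioo (0:ℝ) L, (u σ x y) ^ 2 * ψ x)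
        ((2 * (∫ x : ℝ, ∫ y in Ioo (0:ℝ) L, f₀ τ x y * u τ x y * ψ x)
          - 2 * (∫ x : ℝ, ∫ y in Ioo (0:ℝ) L,
              (f₁ τ x y * (Dx u τ x y * ψ x + u τ x y * deriv ψ x)
                + f₂ τ x y * Dy u τ x y * ψ x)))
        - (-(b * ∫ x : ℝ, ∫ y in Ioo (0:ℝ) L, (u τ x y) ^ 2 * deriv ψ x)
            + (∫ x : ℝ, ∫ y in Ioo (0:ℝ) L,
                (3 * (Dx u τ x y) ^ 2 + (Dy u τ x y) ^ 2) * deriv ψ x)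
            - (∫ x : ℝ, ∫ y in Ioo (0:ℝ) L, (u τ x y) ^ 2 * iteratedDeriv 3 ψ x)
            + 2 * δ * (∫ x : ℝ, ∫ y in Ioo (0:ℝ) L,
                ((Dx (Dx u) τ x y) ^ 2 + (Dy (Dy u) τ x y) ^ 2) * ψ x)
            - 4 * δ * (∫ x : ℝ, ∫ y in Ioo (0:ℝ) L,
                (Dx u τ x y) ^ 2 * iteratedDeriv 2 ψ x)
            + δ * (∫ x : ℝ, ∫ y in Ioo (0:ℝ) L, (u τ x y) ^ 2 * iteratedDeriv 4 ψ x))) τ := by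
    intro τ hτ
    rw [Set.uIcc_of_le h0t] at hτ
    rw [← key τ ⟨hτ.1, hτ.2.trans ht.2⟩]
    exact hFderiv τ
  have hftc := intervalIntegral.integral_eq_sub_of_hasDerivAt hd
    ((hBc.sub hAc).intervalIntegrable 0 t)
  rw [intervalIntegral.integral_sub (hBc.intervalIntegrable 0 t)
    (hAc.intervalIntegrable 0 t)] at hftc
  linarith [hftc]
end
end
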